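/- arXiv:2508.17022 — 13 statements merged into one kernel-verified Lean document; each statement's English description precedes it below -/
import Mathlib

section
/- Let S = ⟨n, n+1, ..., n+t⟩ be the numerical semigroup generated by the consecutive integers n, n+1, ..., n+t with 1 ≤ t < n. Then the Apéry set of n in S is Ap(S,n) = {λn + (λ-1)t + r : 1 ≤ r ≤ t, λ ∈ ℕ, 0 ≤ (λ-1)t + r < n}. -/
lemma memS_aux (n t : ℕ) (ht1 : 1 ≤ t) :
    ∀ s : ℕ, s ∈ {x : ℕ | ∃ c : Fin (t + 1) → ℕ, x = ∑ i, c i * (n + i)} ↔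
      ∃ l : ℕ, l * n ≤ s ∧ s ≤ l * n + l * t := by
  set T : Set ℕ := {x : ℕ | ∃ c : Fin (t + 1) → ℕ, x = ∑ i, c i * (n + i)} with hT
  have h0 : (0:ℕ) ∈ T := ⟨fun _ => 0, by simp⟩
  have hgen : ∀ i : Fin (t+1), n + (i:ℕ) ∈ T := by
    intro i
    refine ⟨fun j => if j = i then 1 else 0, ?_⟩
    simp [ite_mul, Finset.sum_ite_eq']
  have hadd : ∀ a b : ℕ, a ∈ T → b ∈ T → a + b ∈ T := by
    rintro a b ⟨ca, rfl⟩ ⟨cb, rfl⟩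
    exact ⟨ca + cb, by simp [add_mul, Finset.sum_add_distrib]⟩
  have hmul : ∀ k a : ℕ, a ∈ T → k * a ∈ T := by
    intro k a ha
    induction k with
    | zero => simpa using h0
    | succ k ih => have := hadd _ _ ih ha; simpa [Nat.succ_mul] using this
  have hn : n ∈ T := by simpa using hgen 0
  have hnt : n + t ∈ T := by simpa using hgen ⟨t, by omega⟩
  intro s
  constructor
  · rintro ⟨c, rfl⟩
    refine ⟨∑ i, c i, ?_, ?_⟩
    · calc (∑ i, c i) * n = ∑ i, c i * n := Finset.sum_mul ..
        _ ≤ ∑ i, c i * (n + ↑i) :=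
          Finset.sum_le_sum fun i _ => Nat.mul_le_mul_left _ (Nat.le_add_right _ _)
    · calc (∑ i : Fin (t+1), c i * (n + ↑i)) ≤ ∑ i, c i * (n + t) :=
          Finset.sum_le_sum fun i _ =>
            Nat.mul_le_mul_left _ (by have := i.isLt; omega)
        _ = (∑ i, c i) * (n + t) := (Finset.sum_mul ..).symm
        _ = (∑ i, c i) * n + (∑ i, c i) * t := by ring
  · rintro ⟨l, hl1, hl2⟩
    have hj : l * n + (s - l * n) = s := Nat.add_sub_cancel' hl1
    set j := s - l * n with hjdef
    have hjle : j ≤ l * t := by linarith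
    set q := j / t with hq
    set r := j % t with hr
    have hqr : t * q + r = j := Nat.div_add_mod j t
    have hrt : r < t := Nat.mod_lt j ht1
    by_cases hr0 : r = 0
    · have hql : q ≤ l := by
        have : t * q ≤ t * l := by
          have : t * q = j := by omega
          rw [this, mul_comm]; exact hjle
        exact Nat.le_of_mul_le_mul_left this ht1
      have e1 : (l - q) + q = l := by omega
      have hs : s = (l - q) * n + q * (n + t) := by
        have : ((l - q) + q) * n + t * q = (l - q) * n + q * (n + t) := by ring
        rw [e1] at this
        omega
      rw [hs]
      exact hadd _ _ (hmul _ _ hn) (hmul _ _ hnt)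
    · have hql : q < l := by
        have h1 : t * q < t * l := by
          have : t * q < j := by omega
          calc t * q < j := this
            _ ≤ l * t := hjle
            _ = t * l := by ring
        exact Nat.lt_of_mul_lt_mul_left h1
      have e1 : (l - q - 1) + q + 1 = l := by omega
      have hs : s = (l - q - 1) * n + q * (n + t) + (n + r) := by
        have : ((l - q - 1) + q + 1) * n + (t * q + r) =
            (l - q - 1) * n + q * (n + t) + (n + r) := by ring
        rw [e1, hqr] at this
        omega
      rw [hs]
      exact hadd _ _ (hadd _ _ (hmul _ _ hn) (hmul _ _ hnt)) (by simpa using hgen ⟨r, by omega⟩)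

/-- For `S = ⟨n, n+1, …, n+t⟩` with `1 ≤ t < n`, the Apéry set of `n` in `S` is
`{λn + (λ-1)t + r : 1 ≤ r ≤ t, λ ∈ ℕ, 0 ≤ (λ-1)t + r < n}`. -/
theorem stmt_2 (n t : ℕ) (ht1 : 1 ≤ t) (htn : t < n)
    (S : Set ℕ)
    (hS : S = {x : ℕ | ∃ c : Fin (t + 1) → ℕ, x = ∑ i, c i * (n + i)}) :
    {s ∈ S | ¬(n ≤ s ∧ s - n ∈ S)} =
      {x : ℕ | ∃ r lam : ℕ, 1 ≤ r ∧ r ≤ t ∧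
        0 ≤ ((lam : ℤ) - 1) * t + r ∧ ((lam : ℤ) - 1) * t + r < n ∧
        (x : ℤ) = lam * n + ((lam : ℤ) - 1) * t + r} := by
  have hmem : ∀ s : ℕ, s ∈ S ↔ ∃ l : ℕ, l * n ≤ s ∧ s ≤ l * n + l * t := by
    rw [hS]; exact memS_aux n t ht1
  ext x
  simp only [Set.mem_sep_iff, Set.mem_setOf_eq]
  constructor
  · rintro ⟨hxS, hnot⟩
    rw [hmem] at hxS
    obtain ⟨l, hl1, hl2⟩ := hxS
    by_cases hnx : n ≤ x
    · have hxn : x - n ∉ S := fun h => hnot ⟨hnx, h⟩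
      rw [hmem] at hxn
      push_neg at hxn
      -- l ≥ 1
      obtain ⟨m, rfl⟩ : ∃ m, l = m + 1 := by
        rcases l with _ | m
        · exfalso; simp at hl1 hl2; omega
        · exact ⟨m, rfl⟩
      have h1 := hxn m
      have h2 := hxn (m + 1)
      have hd : x - n + n = x := Nat.sub_add_cancel hnx
      have hj' : (m + 1) * n + (x - (m + 1) * n) = x := Nat.add_sub_cancel' hl1
      set j := x - (m + 1) * n with hjdef
      have em : (m + 1) * n = m * n + n := by ring
      have et : (m + 1) * t = m * t + t := by ring
      have hBj : m * t < j := by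
        have h1' := h1 (by linarith)
        linarith
      have hjn : j < n := by
        by_contra hge
        push_neg at hge
        have h2' := h2 (by linarith)
        linarith
      have hrj : m * t + (j - m * t) = j := Nat.add_sub_cancel' (le_of_lt hBj)
      set r := j - m * t with hrdef
      refine ⟨r, m + 1, by omega, by linarith, ?_, ?_, ?_⟩
      · have hcast : ((↑(m+1):ℤ) - 1) * ↑t + ↑r = (j : ℤ) := by
          have := hrj; zify at this; push_cast; linarith
        rw [hcast]; positivity
      · have hcast : ((↑(m+1):ℤ) - 1) * ↑t + ↑r = (j : ℤ) := by
          have := hrj; zify at this; push_cast; linarith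
        rw [hcast]; exact_mod_cast hjn
      · have hji : ((m:ℤ) * t + r = j) := by have := hrj; zify at this; linarith
        have hxi : ((m:ℤ) + 1) * n + j = x := by
          have := hj'; zify at this; linarith
        push_cast
        linarith
    · -- x < n forces x = 0
      have hl0 : l = 0 := by
        rcases l with _ | m
        · rfl
        · exfalso
          have : n ≤ (m + 1) * n := Nat.le_mul_of_pos_left n (Nat.succ_pos m)
          exact hnx (le_trans this hl1)
      subst hl0
      simp only [Nat.zero_mul, Nat.le_zero, Nat.zero_add] at hl1 hl2
      have hx0 : x = 0 := by omega
      subst hx0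
      have htz : (t : ℤ) < n := by exact_mod_cast htn
      refine ⟨t, 0, ht1, le_refl t, ?_, ?_, ?_⟩
      · push_cast; linarith
      · push_cast; linarith
      · push_cast; ring
  · rintro ⟨r, lam, hr1, hrt, h0, hn, hx⟩
    rcases lam with _ | m
    · -- lam = 0 : x = 0
      have hr : r = t ∧ x = 0 := by
        push_cast at h0 hn hx
        constructor <;> [nlinarith; nlinarith]
      obtain ⟨hrt', hx0⟩ := hr
      subst hx0
      refine ⟨(hmem 0).2 ⟨0, by simp⟩, ?_⟩
      rintro ⟨hn0, -⟩
      omega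
    · have hn' : m * t + r < n := by
        have : ((m * t + r : ℕ) : ℤ) < n := by push_cast; push_cast at hn; linarith
        exact_mod_cast this
      have hx' : x = (m + 1) * n + (m * t + r) := by
        have : ((((m+1) * n + (m * t + r) : ℕ)) : ℤ) = (x : ℤ) := by
          push_cast; push_cast at hx; linarith
        exact_mod_cast this.symm
      have em : (m + 1) * n = m * n + n := by ring
      have et : (m + 1) * t = m * t + t := by ring
      constructor
      · rw [hmem]
        exact ⟨m + 1, by rw [hx']; exact Nat.le_add_right _ _, by linarith⟩
      · rintro ⟨hnx, hxnS⟩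
        rw [hmem] at hxnS
        obtain ⟨μ, hμ1, hμ2⟩ := hxnS
        have hd : x - n + n = x := Nat.sub_add_cancel hnx
        rcases le_or_gt μ m with h | h
        · have c1 : μ * n ≤ m * n := Nat.mul_le_mul_right n h
          have c2 : μ * t ≤ m * t := Nat.mul_le_mul_right t h
          linarith
        · have c1 : (m + 1) * n ≤ μ * n := Nat.mul_le_mul_right n h
          linarith
end

section
/- Let S = ⟨n, n+1, ..., n+t⟩ with 1 ≤ t < n. Then the Apéry set of n in S equals {⌈k/t⌉·n + k : 0 ≤ k ≤ n-1}. Equivalently, the least element of S congruent to k modulo n is w(k) = ⌈k/t⌉·n + k for each 0 ≤ k ≤ n-1. -/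
private lemma ceil_mul_ge' (t k : ℕ) (ht : 1 ≤ t) : k ≤ ((k + t - 1) / t) * t := by
  rcases Nat.eq_zero_or_pos k with rfl | hk
  · simp
  · have h := Nat.div_add_mod (k + t - 1) t
    have h2 := Nat.mod_lt (k + t - 1) (show 0 < t from ht)
    rw [mul_comm] at h
    generalize ((k + t - 1) / t) * t = X at h ⊢
    generalize (k + t - 1) % t = Y at h h2
    omega

private lemma ceil_le' (t k q : ℕ) (ht : 1 ≤ t) (h : k ≤ q * t) : (k + t - 1) / t ≤ q := by
  have hlt : k + t - 1 < (q + 1) * t := by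
    rw [add_mul, one_mul]
    generalize q * t = X at h ⊢
    omega
  have := (Nat.div_lt_iff_lt_mul (show 0 < t from ht)).mpr hlt
  omega

private lemma memS' (n t : ℕ) (x : ℕ) :
    (∃ c : Fin (t + 1) → ℕ, x = ∑ i, c i * (n + (i : ℕ))) ↔
      ∃ m r, r ≤ m * t ∧ x = m * n + r := by
  constructor
  · rintro ⟨c, rfl⟩
    refine ⟨∑ i, c i, ∑ i, c i * (i : ℕ), ?_, ?_⟩
    · rw [Finset.sum_mul]
      exact Finset.sum_le_sum fun i _ => Nat.mul_le_mul_left _ (Nat.lt_succ_iff.mp i.isLt)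
    · rw [Finset.sum_mul, ← Finset.sum_add_distrib]
      exact Finset.sum_congr rfl fun i _ => by ring
  · rintro ⟨m, r, hr, rfl⟩
    induction m generalizing r with
    | zero =>
      simp only [Nat.zero_mul, Nat.le_zero] at hr
      subst hr
      exact ⟨0, by simp⟩
    | succ m ih =>
      have hr' : r - min r t ≤ m * t := by
        rw [add_mul, one_mul] at hr
        generalize m * t = X at hr ⊢
        omega
      obtain ⟨c, hc⟩ := ih (r - min r t) hr'
      have hjlt : min r t < t + 1 := by omega
      refine ⟨fun i => c i + if i = ⟨min r t, hjlt⟩ then 1 else 0, ?_⟩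
      have hsum : ∑ i : Fin (t + 1), (c i + if i = ⟨min r t, hjlt⟩ then 1 else 0) * (n + (i : ℕ))
          = (∑ i : Fin (t + 1), c i * (n + (i : ℕ))) + (n + min r t) := by
        simp [add_mul, Finset.sum_add_distrib, ite_mul, Finset.sum_ite_eq']
      rw [hsum, ← hc, add_mul, one_mul]
      generalize m * n = X
      omega

private lemma key' (n t m r q k : ℕ) (hr : r ≤ m * t) (hk : k < n)
    (heq : m * n + r = q * n + k) : k ≤ q * t := by
  have hm : m ≤ q := by
    by_contra h
    push_neg at h
    have h2 : (q + 1) * n ≤ m * n := Nat.mul_le_mul h le_rfl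
    rw [add_mul, one_mul] at h2
    linarith
  have h4 : m * n ≤ q * n := Nat.mul_le_mul hm le_rfl
  have h6 : m * t ≤ q * t := Nat.mul_le_mul hm le_rfl
  linarith

/-- For `S = ⟨n, n+1, …, n+t⟩` with `1 ≤ t < n`, the Apéry set of `n` equals
`{⌈k/t⌉·n + k : 0 ≤ k ≤ n-1}` (here `⌈k/t⌉ = (k + t - 1)/t` in ℕ), and
`w(k) = ⌈k/t⌉·n + k` is the least element of `S` congruent to `k` mod `n`. -/
theorem stmt_3 (n t : ℕ) (ht1 : 1 ≤ t) (htn : t < n)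
    (S : Set ℕ)
    (hS : S = {x : ℕ | ∃ c : Fin (t + 1) → ℕ, x = ∑ i, c i * (n + i)}) :
    {s ∈ S | ¬(n ≤ s ∧ s - n ∈ S)} =
      {x : ℕ | ∃ k < n, x = ((k + t - 1) / t) * n + k} ∧
    ∀ k < n, ((k + t - 1) / t) * n + k ∈ S ∧
      (((k + t - 1) / t) * n + k) % n = k ∧
      ∀ s ∈ S, s % n = k → ((k + t - 1) / t) * n + k ≤ s := by
  subst hS
  have hn : 0 < n := by omega
  have hmemS : ∀ x : ℕ,
      x ∈ {x : ℕ | ∃ c : Fin (t + 1) → ℕ, x = ∑ i, c i * (n + (i : ℕ))} ↔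
        ∃ m r, r ≤ m * t ∧ x = m * n + r := fun x => by
    rw [Set.mem_setOf_eq]; exact memS' n t x
  -- w(k) is in S
  have hwS : ∀ k, k < n → ∃ m r, r ≤ m * t ∧ ((k + t - 1) / t) * n + k = m * n + r :=
    fun k hk => ⟨(k + t - 1) / t, k, ceil_mul_ge' t k ht1, rfl⟩
  -- w(k) mod n = k
  have hwmod : ∀ k, k < n → (((k + t - 1) / t) * n + k) % n = k := by
    intro k hk
    rw [add_comm, Nat.add_mul_mod_self_right, Nat.mod_eq_of_lt hk]
  -- minimality
  have hw : ∀ k, k < n → ∀ s, (∃ m r, r ≤ m * t ∧ s = m * n + r) → s % n = k →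
      ((k + t - 1) / t) * n + k ≤ s := by
    intro k hk s hs hmod
    obtain ⟨m, r, hr, rfl⟩ := hs
    have hklt : k < n := hk
    have B : ((m * n + r) / n) * n + k = m * n + r := by
      rw [← hmod]; exact Nat.div_add_mod' _ n
    have hkle : k ≤ ((m * n + r) / n) * t := key' n t m r _ k hr hk B.symm
    have hceil : (k + t - 1) / t ≤ (m * n + r) / n := ceil_le' t k _ ht1 hkle
    have h2 : ((k + t - 1) / t) * n ≤ ((m * n + r) / n) * n := Nat.mul_le_mul hceil le_rfl
    linarith
  constructor
  · ext x
    simp only [Set.mem_sep_iff, Set.mem_setOf_eq]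
    constructor
    · rintro ⟨hxS, hnot⟩
      obtain ⟨m, r, hr, rfl⟩ := (hmemS x).mp hxS
      set q := (m * n + r) / n with hqdef
      set k := (m * n + r) % n with hkdef
      have hk : k < n := Nat.mod_lt _ hn
      have B : q * n + k = m * n + r := Nat.div_add_mod' _ n
      have hkle : k ≤ q * t := key' n t m r q k hr hk B.symm
      have hceil : (k + t - 1) / t ≤ q := ceil_le' t k q ht1 hkle
      refine ⟨k, hk, ?_⟩
      rcases eq_or_lt_of_le hceil with hEq | hlt
      · rw [hEq]; exact B.symm
      · exfalso
        -- then x - n ∈ S and n ≤ x, contradicting hnot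
        have hq1 : 1 ≤ q := lt_of_le_of_lt (Nat.zero_le _) hlt
        have h7 : (q - 1) * n + n = q * n := by
          calc (q - 1) * n + n = (q - 1 + 1) * n := by rw [Nat.succ_mul]
            _ = q * n := by rw [Nat.sub_add_cancel hq1]
        have h8 : 1 * n ≤ q * n := Nat.mul_le_mul hq1 le_rfl
        rw [one_mul] at h8
        have hge : n ≤ m * n + r := by linarith
        have hk1 : k ≤ (q - 1) * t := by
          have hc1 : (k + t - 1) / t ≤ q - 1 := Nat.le_sub_one_of_lt hlt
          have := Nat.mul_le_mul hc1 (le_refl t)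
          have h9 := ceil_mul_ge' t k ht1
          linarith
        have heq2 : m * n + r - n = (q - 1) * n + k :=
          Nat.sub_eq_of_eq_add (by linarith)
        exact hnot ⟨hge, (hmemS _).mpr ⟨q - 1, k, hk1, heq2⟩⟩
    · rintro ⟨k, hk, rfl⟩
      refine ⟨(hmemS _).mpr (hwS k hk), ?_⟩
      rintro ⟨hge, hsub⟩
      have hc1 : 1 ≤ (k + t - 1) / t := by
        by_contra h
        push_neg at h
        have h0 : (k + t - 1) / t = 0 := Nat.lt_one_iff.mp h
        rw [h0, zero_mul] at hge
        omega
      have h7 : ((k + t - 1) / t - 1) * n + n = ((k + t - 1) / t) * n := by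
        calc ((k + t - 1) / t - 1) * n + n = ((k + t - 1) / t - 1 + 1) * n := by
              rw [Nat.succ_mul]
          _ = ((k + t - 1) / t) * n := by rw [Nat.sub_add_cancel hc1]
      have heq2 : ((k + t - 1) / t) * n + k - n = ((k + t - 1) / t - 1) * n + k :=
        Nat.sub_eq_of_eq_add (by linarith)
      have hmod2 : (((k + t - 1) / t) * n + k - n) % n = k := by
        rw [heq2, add_comm, Nat.add_mul_mod_self_right, Nat.mod_eq_of_lt hk]
      have hle := hw k hk _ ((hmemS _).mp hsub) hmod2
      rw [heq2] at hle
      linarith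
  · intro k hk
    exact ⟨(hmemS _).mpr (hwS k hk), hwmod k hk,
      fun s hs hmod => hw k hk s ((hmemS s).mp hs) hmod⟩
end

section
/- Let S = ⟨n, n+1, ..., n+t⟩ with 1 ≤ t < n, and let q be a positive integer. Then q ∈ S if and only if (q mod n) ≤ ⌊q/n⌋·t. -/
/-- For `S = ⟨n, n+1, …, n+t⟩` with `1 ≤ t < n` and a positive integer `q`,
`q ∈ S` if and only if `(q mod n) ≤ ⌊q/n⌋·t`. -/
theorem stmt_4 (n t : ℕ) (ht1 : 1 ≤ t) (htn : t < n)
    (S : Set ℕ)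
    (hS : S = {x : ℕ | ∃ c : Fin (t + 1) → ℕ, x = ∑ i, c i * (n + i)})
    (q : ℕ) (hq : 1 ≤ q) :
    q ∈ S ↔ q % n ≤ q / n * t := by
  subst hS
  have hn : 0 < n := by omega
  have ht0 : 0 < t := ht1
  constructor
  · rintro ⟨c, rfl⟩
    set m := ∑ i, c i with hm
    set s := ∑ i : Fin (t + 1), c i * (i : ℕ) with hs
    have hsum : ∑ i, c i * (n + (i : ℕ)) = s + n * m := by
      rw [hs, hm, Finset.mul_sum, ← Finset.sum_add_distrib]
      apply Finset.sum_congr rfl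
      intro i _
      ring
    have hst : s ≤ m * t := by
      rw [hs, hm, Finset.sum_mul]
      exact Finset.sum_le_sum fun i _ => Nat.mul_le_mul_left _ i.is_le
    rw [hsum, Nat.add_mul_mod_self_left, Nat.add_mul_div_left _ _ hn]
    calc s % n ≤ s := Nat.mod_le _ _
      _ ≤ m * t := hst
      _ ≤ (s / n + m) * t := Nat.mul_le_mul_right _ (Nat.le_add_left _ _)
  · intro h
    set k := q / n with hk
    set r := q % n with hr
    have hq' : n * k + r = q := Nat.div_add_mod q n
    set a := r / t with ha
    set b := r % t with hb
    have habt : t * a + b = r := Nat.div_add_mod r t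
    have hbt : b < t := Nat.mod_lt _ ht0
    set e : ℕ := if b = 0 then 0 else 1 with he
    have hae : a + e ≤ k := by
      rcases eq_or_ne b 0 with h0 | h0
      · have : t * a ≤ t * k := by
          rw [mul_comm t k]; omega
        have := Nat.le_of_mul_le_mul_left this ht0
        simp [he, h0]; omega
      · have : t * a < t * k := by
          rw [mul_comm t k]; omega
        have := Nat.lt_of_mul_lt_mul_left this
        simp [he, h0]; omega
    have heb : e * b = b := by
      rcases eq_or_ne b 0 with h0 | h0 <;> simp [he, h0]
    set A := k - a - e with hA0
    have hA : A + a + e = k := by omega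
    refine ⟨fun i => (if i = (0 : Fin (t + 1)) then A else 0)
        + (if i = ⟨t, by omega⟩ then a else 0)
        + (if i = ⟨b, by omega⟩ then e else 0), ?_⟩
    have hsum : ∑ i : Fin (t + 1),
        ((if i = (0 : Fin (t + 1)) then A else 0)
        + (if i = ⟨t, by omega⟩ then a else 0)
        + (if i = ⟨b, by omega⟩ then e else 0)) * (n + (i : ℕ))
        = A * (n + 0) + a * (n + t) + e * (n + b) := by
      simp only [add_mul, Finset.sum_add_distrib, ite_mul, zero_mul,
        Finset.sum_ite_eq', Finset.mem_univ, if_true]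
      norm_num
    rw [hsum]
    calc q = k * n + (t * a + e * b) := by rw [heb, habt, mul_comm k n]; omega
      _ = (A + a + e) * n + (t * a + e * b) := by rw [hA]
      _ = A * (n + 0) + a * (n + t) + e * (n + b) := by ring
end

section
/- Let S be a numerical semigroup with multiplicity m_S (the least nonzero element of S), and let q ≥ 1. Define the Geil-Matsumoto bound GM_q(S) := #(S \ (qS* + S)) + 1, where S* = S \ {0} and qS* + S = {qa + b : a ∈ S*, b ∈ S}. Then GM_q(S) ≤ q·m_S + 1. -/
/-- The Geil–Matsumoto bound is at most the Lewittes bound: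
`GM_q(S) = #(S \ (qS* + S)) + 1 ≤ q·m_S + 1`. -/
theorem stmt_5 (S : Set ℕ) (h0 : 0 ∈ S)
    (hadd : ∀ a ∈ S, ∀ b ∈ S, a + b ∈ S) (hfin : Sᶜ.Finite)
    (m : ℕ) (hm : m ∈ S) (hm0 : m ≠ 0) (hmin : ∀ s ∈ S, s ≠ 0 → m ≤ s)
    (q : ℕ) (hq : 1 ≤ q) :
    (S \ {x | ∃ a ∈ S, a ≠ 0 ∧ ∃ b ∈ S, x = q * a + b}).ncard + 1 ≤ q * m + 1 := by
  set D := S \ {x | ∃ a ∈ S, a ≠ 0 ∧ ∃ b ∈ S, x = q * a + b} with hD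
  suffices h : D.ncard ≤ q * m by omega
  haveI : NeZero (q * m) := ⟨Nat.mul_ne_zero (by omega) hm0⟩
  have hmul : ∀ k : ℕ, 1 ≤ k → k * m ∈ S := by
    intro k hk
    induction k with
    | zero => omega
    | succ n ih =>
      rcases Nat.eq_zero_or_pos n with hn | hn
      · subst hn; simpa using hm
      · have := hadd _ (ih hn) m hm
        simpa [Nat.succ_mul] using this
  have hinj : Set.InjOn (fun x : ℕ => (x : ZMod (q * m))) D := by
    rintro x hx y hy hxy
    wlog hle : x ≤ y generalizing x y
    · exact (this hy hx hxy.symm (le_of_not_ge hle)).symm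
    have hmod : x ≡ y [MOD q * m] := (ZMod.natCast_eq_natCast_iff _ _ _).mp hxy
    obtain ⟨k, hk⟩ := (Nat.modEq_iff_dvd' hle).mp hmod
    rcases Nat.eq_zero_or_pos k with h0k | h0k
    · subst h0k; simp at hk; omega
    · exfalso
      have hqmk : q * (k * m) = q * m * k := by ring
      exact hy.2 ⟨k * m, hmul k h0k, Nat.mul_ne_zero (by omega) hm0, x, hx.1, by omega⟩
  calc D.ncard = ((fun x : ℕ => (x : ZMod (q * m))) '' D).ncard :=
        (Set.ncard_image_of_injOn hinj).symm
    _ ≤ (Set.univ : Set (ZMod (q * m))).ncard :=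
        Set.ncard_le_ncard (Set.subset_univ _) Set.finite_univ
    _ = q * m := by simp [Set.ncard_univ, Nat.card_eq_fintype_card, ZMod.card]
end

section
/- Let q ≥ 1 be an integer and S a numerical semigroup with q ∈ S. Then GM_q(S) = L_q(S), i.e., #(S \ (qS* + S)) + 1 = q·m_S + 1. -/
/-- If `q ∈ S`, then the Geil–Matsumoto bound equals the Lewittes bound:
`#(S \ (qS*+S)) + 1 = q·m_S + 1`. -/
theorem stmt_7 (S : Set ℕ) (h0 : 0 ∈ S)
    (hadd : ∀ a ∈ S, ∀ b ∈ S, a + b ∈ S) (hfin : Sᶜ.Finite)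
    (m : ℕ) (hm : m ∈ S) (hm0 : m ≠ 0) (hmin : ∀ s ∈ S, s ≠ 0 → m ≤ s)
    (q : ℕ) (hq : 1 ≤ q) (hqS : q ∈ S) :
    (S \ {x | ∃ a ∈ S, a ≠ 0 ∧ ∃ b ∈ S, x = q * a + b}).ncard + 1 = q * m + 1 := by
  classical
  set n := q * m with hn
  have hmulS : ∀ x ∈ S, ∀ k : ℕ, k * x ∈ S := by
    intro x hx k
    induction k with
    | zero => simpa using h0
    | succ k ih => simpa [Nat.succ_mul] using hadd _ ih _ hx
  have hnS : n ∈ S := by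
    have := hmulS m hm q
    simpa [hn, mul_comm] using this
  have hn0 : 0 < n := by
    have : m ≠ 0 := hm0
    have : n ≠ 0 := Nat.mul_ne_zero (by omega) hm0
    omega
  clear_value n
  -- key characterization of membership in qS* + S for elements of S
  have key : ∀ s ∈ S,
      ((∃ a ∈ S, a ≠ 0 ∧ ∃ b ∈ S, s = q * a + b) ↔ (n ≤ s ∧ s - n ∈ S)) := by
    intro s hs
    constructor
    · rintro ⟨a, ha, ha0, b, hb, rfl⟩
      have ham : m ≤ a := hmin a ha ha0
      have hsplit : a = m + (a - m) := by omega
      have hcalc : q * a + b = n + (q * (a - m) + b) := by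
        conv_lhs => rw [hsplit]
        rw [hn]; ring
      have h1 : n ≤ q * a + b := by omega
      refine ⟨h1, ?_⟩
      have : q * a + b - n = q * (a - m) + b := by omega
      rw [this]
      have : q * (a - m) ∈ S := by
        have := hmulS q hqS (a - m)
        simpa [mul_comm] using this
      exact hadd _ this _ hb
    · rintro ⟨h1, h2⟩
      exact ⟨m, hm, hm0, s - n, h2, by omega⟩
  set A := S \ {x | ∃ a ∈ S, a ≠ 0 ∧ ∃ b ∈ S, x = q * a + b} with hA
  have hAeq : A = {s | s ∈ S ∧ ¬(n ≤ s ∧ s - n ∈ S)} := by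
    ext s
    simp only [hA, Set.mem_diff, Set.mem_setOf_eq]
    constructor
    · rintro ⟨hs, hns⟩
      exact ⟨hs, fun h => hns ((key s hs).mpr h)⟩
    · rintro ⟨hs, hns⟩
      exact ⟨hs, fun h => hns ((key s hs).mp h)⟩
  -- bijection A → [0, n) via mod n
  have hinjaux : ∀ s ∈ A, ∀ t ∈ A, s % n = t % n → s ≤ t → s = t := by
    intro s hsA t htA hmod hle
    rw [hAeq] at hsA htA
    obtain ⟨hsS, -⟩ := hsA
    obtain ⟨htS, htn⟩ := htA
    have hdvd : n ∣ t - s := (Nat.modEq_iff_dvd' hle).mp hmod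
    obtain ⟨c, hc⟩ := hdvd
    rcases Nat.eq_zero_or_pos c with hc0 | hcpos
    · subst hc0; simp only [mul_zero] at hc; omega
    · exfalso
      apply htn
      have hnc : n ≤ n * c := Nat.le_mul_of_pos_right n hcpos
      have h1 : n ≤ t := by omega
      refine ⟨h1, ?_⟩
      have hcm : (c - 1) * n ∈ S := hmulS n hnS (c - 1)
      have ht' : t - n = s + (c - 1) * n := by
        have : (c - 1) * n = n * c - n := by
          rw [Nat.sub_mul, mul_comm]; omega
        omega
      rw [ht']
      exact hadd _ hsS _ hcm
  have hinj : Set.InjOn (· % n) A := by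
    intro s hs t ht hst
    rcases le_total s t with h | h
    · exact hinjaux s hs t ht hst h
    · exact (hinjaux t ht s hs hst.symm h).symm
  have hmaps : Set.MapsTo (· % n) A (Set.Iio n) := by
    intro s _
    exact Nat.mod_lt _ hn0
  have hsurj : Set.SurjOn (· % n) A (Set.Iio n) := by
    intro r hr
    have hrn : r < n := hr
    -- find an element of S congruent to r mod n
    obtain ⟨B, hB⟩ := hfin.bddAbove
    have hex : ∃ s, s ∈ S ∧ s % n = r := by
      refine ⟨r + (B + 1) * n, ?_, ?_⟩
      · by_contra hns
        have : r + (B + 1) * n ≤ B := hB hns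
        nlinarith
      · rw [Nat.add_mul_mod_self_right]
        exact Nat.mod_eq_of_lt hrn
    have hexP : ∃ s, s ∈ S ∧ s % n = r := hex
    obtain ⟨hsS, hsr⟩ := Nat.find_spec hexP
    refine ⟨Nat.find hexP, ?_, hsr⟩
    rw [hAeq]
    refine ⟨hsS, ?_⟩
    rintro ⟨h1, h2⟩
    have hlt : Nat.find hexP - n < Nat.find hexP := by omega
    have hmod : (Nat.find hexP - n) % n = r := by
      have heq : Nat.find hexP = (Nat.find hexP - n) + n := by omega
      calc (Nat.find hexP - n) % n = ((Nat.find hexP - n) + n) % n :=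
            (Nat.add_mod_right _ _).symm
        _ = Nat.find hexP % n := by rw [← heq]
        _ = r := hsr
    exact Nat.find_min hexP hlt ⟨h2, hmod⟩
  have hbij : Set.BijOn (· % n) A (Set.Iio n) := ⟨hmaps, hinj, hsurj⟩
  have himg : (· % n) '' A = Set.Iio n := hbij.image_eq
  have hAfin : A.Finite := by
    apply Set.Finite.of_finite_image _ hinj
    rw [himg]; exact Set.finite_Iio n
  have hcard : A.ncard = n := by
    have h1 : ((· % n) '' A).ncard = A.ncard := Set.ncard_image_of_injOn hinj
    rw [himg] at h1
    rw [← h1, ← Finset.coe_Iio, Set.ncard_coe_finset, Nat.card_Iio]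
  rw [hcard, hn]
end

section
/- Let S be a numerical semigroup, n a nonzero element of S, q ≥ 1 an integer, and w(i) the least element of S congruent to i modulo n for 0 ≤ i ≤ n-1. For k ∈ {0,...,n-1} and i ∈ {1,...,n-1}, set k_i := (k - iq) mod n. Then GM_q(S) = 1 + (1/n)·Σ_{k=0}^{n-1} min_{1 ≤ i ≤ n-1} { qn, q·w(i) - w(k) + w(k_i) }. -/
open Finset

private def kk (q n k i : ℕ) : ℕ := ((((k : ℤ) - i * q) % n)).toNat

private def mf (q n : ℕ) (w : ℕ → ℕ) (k : ℕ) : ℤ :=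
  (insert ((q : ℤ) * n)
    ((Finset.Icc 1 (n - 1)).image fun i =>
      (q : ℤ) * w i - w k + w (kk q n k i))).min'
    (Finset.insert_nonempty _ _)

private lemma natmod_eq {n b r : ℕ} (h : (b:ℤ) % (n:ℤ) = (r:ℤ)) : b % n = r := by
  rw [← Int.natCast_mod] at h; exact_mod_cast h

private lemma kk_cast {n : ℕ} (hn : n ≠ 0) (q k i : ℕ) :
    (kk q n k i : ℤ) = ((k:ℤ) - i*q) % n := by
  have h1 : 0 ≤ ((k:ℤ) - i*q) % n :=
    Int.emod_nonneg _ (by exact_mod_cast hn)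
  exact Int.toNat_of_nonneg h1

private lemma kk_lt {n : ℕ} (hn : n ≠ 0) (q k i : ℕ) : kk q n k i < n := by
  have h1 : 0 ≤ ((k:ℤ) - i*q) % n := Int.emod_nonneg _ (by exact_mod_cast hn)
  have h2 : ((k:ℤ) - i*q) % n < n :=
    Int.emod_lt_of_pos _ (by exact_mod_cast Nat.pos_of_ne_zero hn)
  unfold kk; omega

private lemma mul_mem (S : Set ℕ) (h0 : 0 ∈ S)
    (hadd : ∀ a ∈ S, ∀ b ∈ S, a + b ∈ S) :
    ∀ c, ∀ a ∈ S, c * a ∈ S := by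
  intro c a ha
  induction c with
  | zero => simpa
  | succ d ih => have := hadd a ha _ ih; simpa [Nat.succ_mul, add_comm] using this

private lemma mem_S_iff (S : Set ℕ) (h0 : 0 ∈ S)
    (hadd : ∀ a ∈ S, ∀ b ∈ S, a + b ∈ S)
    (n : ℕ) (hn : n ∈ S) (hn0 : n ≠ 0)
    (w : ℕ → ℕ)
    (hw : ∀ i < n, w i ∈ S ∧ w i % n = i ∧ ∀ s ∈ S, s % n = i → w i ≤ s)
    (x : ℕ) : x ∈ S ↔ w (x % n) ≤ x := by
  have hpos : 0 < n := Nat.pos_of_ne_zero hn0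
  obtain ⟨hwS, hwmod, hwmin⟩ := hw (x % n) (Nat.mod_lt x hpos)
  constructor
  · intro hx; exact hwmin x hx rfl
  · intro hle
    have hmeq : Nat.ModEq n (w (x % n)) x := by
      show w (x % n) % n = x % n
      simpa using hwmod
    obtain ⟨c, hc⟩ := (Nat.modEq_iff_dvd' hle).mp hmeq
    have key : ∀ d, w (x % n) + d * n ∈ S := by
      intro d
      induction d with
      | zero => simpa using hwS
      | succ e ih => simpa [Nat.succ_mul, ← add_assoc] using hadd _ ih _ hn
    have hx : x = w (x % n) + c * n := by
      have := Nat.mul_comm n c ▸ hc; omega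
    rw [hx]; exact key c


open Finset

private lemma mf_le_qn (q n : ℕ) (w : ℕ → ℕ) (k : ℕ) : mf q n w k ≤ (q:ℤ) * n :=
  Finset.min'_le _ _ (Finset.mem_insert_self _ _)

private lemma mf_le (q n : ℕ) (w : ℕ → ℕ) (k : ℕ) {i : ℕ} (hi : i ∈ Finset.Icc 1 (n-1)) :
    mf q n w k ≤ (q:ℤ) * w i - w k + w (kk q n k i) :=
  Finset.min'_le _ _ (Finset.mem_insert_of_mem (Finset.mem_image_of_mem _ hi))

-- w a ≡ a mod n as integers, for a < n
private lemma w_modeq (n : ℕ) (w : ℕ → ℕ)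
    (hwmod : ∀ i < n, w i % n = i)
    {a : ℕ} (ha : a < n) : (w a : ℤ) ≡ a [ZMOD n] := by
  show (w a : ℤ) % n = (a:ℤ) % n
  have h := hwmod a ha
  have h2 : ((w a % n : ℕ) : ℤ) = ((a % n : ℕ) : ℤ) := by
    rw [h, Nat.mod_eq_of_lt ha]
  rw [Int.natCast_mod, Int.natCast_mod] at h2
  exact h2

private lemma kk_modeq {n : ℕ} (hn : n ≠ 0) (q k i : ℕ) :
    (kk q n k i : ℤ) ≡ (k:ℤ) - i * q [ZMOD n] := by
  rw [kk_cast hn]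
  exact Int.emod_emod_of_dvd _ dvd_rfl

private lemma mf_cases (q n : ℕ) (w : ℕ → ℕ) (k : ℕ) :
    mf q n w k = (q:ℤ) * n ∨
      ∃ i ∈ Finset.Icc 1 (n-1), mf q n w k = (q:ℤ) * w i - w k + w (kk q n k i) := by
  have h := Finset.min'_mem (insert ((q : ℤ) * n)
    ((Finset.Icc 1 (n - 1)).image fun i =>
      (q : ℤ) * w i - w k + w (kk q n k i))) (Finset.insert_nonempty _ _)
  rw [Finset.mem_insert, Finset.mem_image] at h
  rcases h with h | ⟨i, hi, hieq⟩
  · exact Or.inl h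
  · exact Or.inr ⟨i, hi, hieq.symm⟩
private lemma sum_mem_k (S : Set ℕ) (h0 : 0 ∈ S)
    (hadd : ∀ a ∈ S, ∀ b ∈ S, a + b ∈ S)
    (n : ℕ) (hn : n ∈ S) (hn0 : n ≠ 0) (q : ℕ)
    (w : ℕ → ℕ)
    (hw : ∀ i < n, w i ∈ S ∧ w i % n = i ∧ ∀ s ∈ S, s % n = i → w i ≤ s)
    {k i : ℕ} (hk : k < n) (hi : i ∈ Finset.Icc 1 (n-1)) :
    (w k : ℤ) ≤ (q:ℤ) * w i + w (kk q n k i) := by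
  have hwmod : ∀ j < n, w j % n = j := fun j hj => (hw j hj).2.1
  have hiltn : i < n := by
    rw [Finset.mem_Icc] at hi; omega
  set X : ℕ := q * w i + w (kk q n k i) with hX
  have hXS : X ∈ S :=
    hadd _ (mul_mem S h0 hadd q _ (hw i hiltn).1) _ (hw _ (kk_lt hn0 q k i)).1
  have hC : (w (kk q n k i) : ℤ) ≡ (k:ℤ) - i * q [ZMOD n] :=
    (w_modeq n w hwmod (kk_lt hn0 q k i)).trans (kk_modeq hn0 q k i)
  have hD : (q:ℤ) * w i ≡ (q:ℤ) * i [ZMOD n] :=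
    (w_modeq n w hwmod hiltn).mul_left _
  have hXk : (X:ℤ) ≡ (k:ℤ) [ZMOD n] := by
    have := hD.add hC
    have heq : (q:ℤ) * i + ((k:ℤ) - i * q) = k := by ring
    rw [heq] at this
    simpa [hX] using (by push_cast; exact this : (X:ℤ) ≡ (k:ℤ) [ZMOD n])
  have hXmod : X % n = k := by
    apply natmod_eq
    have : (k:ℤ) % n = k := Int.emod_eq_of_lt (by positivity) (by exact_mod_cast hk)
    rw [hXk, this]
  have := (hw k hk).2.2 X hXS hXmod
  push_cast [hX] at this ⊢
  linarith

private lemma mf_nonneg (S : Set ℕ) (h0 : 0 ∈ S)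
    (hadd : ∀ a ∈ S, ∀ b ∈ S, a + b ∈ S)
    (n : ℕ) (hn : n ∈ S) (hn0 : n ≠ 0) (q : ℕ)
    (w : ℕ → ℕ)
    (hw : ∀ i < n, w i ∈ S ∧ w i % n = i ∧ ∀ s ∈ S, s % n = i → w i ≤ s)
    {k : ℕ} (hk : k < n) : 0 ≤ mf q n w k := by
  rcases mf_cases q n w k with h | ⟨i, hi, h⟩
  · rw [h]; positivity
  · rw [h]
    have := sum_mem_k S h0 hadd n hn hn0 q w hw hk hi
    linarith

private lemma mf_dvd (n : ℕ) (hn0 : n ≠ 0) (q : ℕ)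
    (w : ℕ → ℕ) (hwmod : ∀ i < n, w i % n = i)
    {k : ℕ} (hk : k < n) : (n:ℤ) ∣ mf q n w k := by
  rcases mf_cases q n w k with h | ⟨i, hi, h⟩
  · exact ⟨q, by rw [h]; ring⟩
  · have hiltn : i < n := by rw [Finset.mem_Icc] at hi; omega
    have hC : (w (kk q n k i) : ℤ) ≡ (k:ℤ) - i * q [ZMOD n] :=
      (w_modeq n w hwmod (kk_lt hn0 q k i)).trans (kk_modeq hn0 q k i)
    have hD : (q:ℤ) * w i ≡ (q:ℤ) * i [ZMOD n] :=
      (w_modeq n w hwmod hiltn).mul_left _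
    have hE : (w k : ℤ) ≡ (k:ℤ) [ZMOD n] := w_modeq n w hwmod hk
    have := (hD.sub hE).add hC
    have heq : (q:ℤ) * i - k + ((k:ℤ) - i * q) = 0 := by ring
    rw [heq] at this
    rw [h]
    exact (Int.modEq_zero_iff_dvd).mp this
private lemma cast_modeq (n x : ℕ) : (x:ℤ) ≡ ((x % n : ℕ) : ℤ) [ZMOD n] := by
  show (x:ℤ) % n = ((x % n : ℕ) : ℤ) % n
  rw [Int.natCast_mod]
  exact (Int.emod_emod_of_dvd _ dvd_rfl).symm

private lemma memT_iff (S : Set ℕ) (h0 : 0 ∈ S)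
    (hadd : ∀ a ∈ S, ∀ b ∈ S, a + b ∈ S)
    (n : ℕ) (hn : n ∈ S) (hn0 : n ≠ 0) (q : ℕ) (hq : 1 ≤ q)
    (w : ℕ → ℕ)
    (hw : ∀ i < n, w i ∈ S ∧ w i % n = i ∧ ∀ s ∈ S, s % n = i → w i ≤ s)
    (x : ℕ) :
    (∃ a ∈ S, a ≠ 0 ∧ ∃ b ∈ S, x = q * a + b) ↔
      (w (x % n) : ℤ) + mf q n w (x % n) ≤ (x:ℤ) := by
  have hpos : 0 < n := Nat.pos_of_ne_zero hn0
  have hwmod : ∀ j < n, w j % n = j := fun j hj => (hw j hj).2.1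
  set k := x % n with hkdef
  have hk : k < n := Nat.mod_lt x hpos
  have hxk : (x:ℤ) ≡ (k:ℤ) [ZMOD n] := cast_modeq n x
  constructor
  · rintro ⟨a, ha, ha0, b, hb, hx⟩
    set i := a % n with hidef
    have hiltn : i < n := Nat.mod_lt a hpos
    have hai : (a:ℤ) ≡ (i:ℤ) [ZMOD n] := cast_modeq n a
    have hbeq : (b:ℤ) = (x:ℤ) - a * q := by
      have : (x:ℤ) = q * a + b := by exact_mod_cast hx
      linarith
    have hmb : (b:ℤ) ≡ (k:ℤ) - i * q [ZMOD n] := by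
      rw [hbeq]; exact hxk.sub (hai.mul_right q)
    have hbk : b % n = kk q n k i := by
      apply natmod_eq
      rw [kk_cast hn0]
      exact hmb
    have hwb : w (b % n) ≤ b := (mem_S_iff S h0 hadd n hn hn0 w hw b).mp hb
    have hwa : w i ≤ a := by
      have := (mem_S_iff S h0 hadd n hn hn0 w hw a).mp ha
      rwa [← hidef] at this
    by_cases hi0 : i = 0
    · -- a is a positive multiple of n
      have hna : n ≤ a := Nat.le_of_dvd (Nat.pos_of_ne_zero ha0)
        (Nat.dvd_of_mod_eq_zero (hidef ▸ hi0 ▸ rfl))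
      have hkk0 : kk q n k 0 = k := by
        unfold kk
        have h1 : ((k:ℤ) - (0:ℕ) * q) = (k:ℤ) := by push_cast; ring
        rw [h1, Int.emod_eq_of_lt (by positivity) (by exact_mod_cast hk)]
        simp
      have hwkb : w k ≤ b := by
        rw [hbk, hi0, hkk0] at hwb; exact hwb
      have h1 : mf q n w k ≤ (q:ℤ) * n := mf_le_qn q n w k
      have h2 : (q:ℤ) * n ≤ (q:ℤ) * a := by
        have : (n:ℤ) ≤ a := by exact_mod_cast hna
        exact mul_le_mul_of_nonneg_left this (by positivity)
      have hxc : (x:ℤ) = q * a + b := by exact_mod_cast hx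
      have hwkb' : (w k : ℤ) ≤ b := by exact_mod_cast hwkb
      linarith
    · have hiIcc : i ∈ Finset.Icc 1 (n-1) := by
        rw [Finset.mem_Icc]; omega
      have h1 : mf q n w k ≤ (q:ℤ) * w i - w k + w (kk q n k i) :=
        mf_le q n w k hiIcc
      have hwkb : (w (kk q n k i) : ℤ) ≤ b := by
        rw [hbk] at hwb; exact_mod_cast hwb
      have h2 : (q:ℤ) * w i ≤ (q:ℤ) * a := by
        have : (w i : ℤ) ≤ a := by exact_mod_cast hwa
        exact mul_le_mul_of_nonneg_left this (by positivity)
      have hxc : (x:ℤ) = q * a + b := by exact_mod_cast hx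
      linarith
  · intro hge
    rcases mf_cases q n w k with h | ⟨i, hi, h⟩
    · have hqnx : q * n ≤ x := by
        have : ((q * n : ℕ) : ℤ) ≤ x := by push_cast; linarith [Int.ofNat_nonneg (w k)]
        exact_mod_cast this
      refine ⟨n, hn, hn0, x - q * n, ?_, by omega⟩
      have hbc : ((x - q * n : ℕ) : ℤ) = (x:ℤ) - q * n := by
        push_cast [Nat.cast_sub hqnx]; ring
      have hbmod : (x - q * n) % n = k := by
        apply natmod_eq
        have hqn0 : ((q:ℤ) * n) ≡ 0 [ZMOD n] := by
          show ((q:ℤ) * n) % n = 0 % n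
          simp [Int.mul_emod_left, mul_comm]
        have := hxk.sub hqn0
        rw [hbc]
        calc ((x:ℤ) - q * n) % n = ((k:ℤ) - 0) % n := this
          _ = (k:ℤ) := by
              simp
              exact Int.emod_eq_of_lt (by positivity) (by exact_mod_cast hk)
      rw [mem_S_iff S h0 hadd n hn hn0 w hw, hbmod]
      have : (w k : ℤ) ≤ ((x - q * n : ℕ) : ℤ) := by rw [hbc]; linarith
      exact_mod_cast this
    · have hiltn : i < n := by rw [Finset.mem_Icc] at hi; omega
      have hi1 : 1 ≤ i := by rw [Finset.mem_Icc] at hi; omega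
      have hxge : (q:ℤ) * w i + w (kk q n k i) ≤ x := by linarith
      have hqwx : q * w i ≤ x := by
        have : ((q * w i : ℕ) : ℤ) ≤ x := by
          push_cast; linarith [Int.ofNat_nonneg (w (kk q n k i))]
        exact_mod_cast this
      have hwi0 : w i ≠ 0 := by
        intro h'
        have := hwmod i hiltn
        rw [h'] at this
        simp at this
        omega
      refine ⟨w i, (hw i hiltn).1, hwi0, x - q * w i, ?_, by omega⟩
      have hbc : ((x - q * w i : ℕ) : ℤ) = (x:ℤ) - q * w i := by
        push_cast [Nat.cast_sub hqwx]; ring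
      have hbmod : (x - q * w i) % n = kk q n k i := by
        apply natmod_eq
        rw [hbc, kk_cast hn0]
        have hm : ((x:ℤ) - q * w i) ≡ ((k:ℤ) - q * i) [ZMOD n] :=
          hxk.sub ((w_modeq n w hwmod hiltn).mul_left q)
        have : ((k:ℤ) - q * i) = ((k:ℤ) - i * q) := by ring
        rw [← this]
        exact hm
      rw [mem_S_iff S h0 hadd n hn hn0 w hw, hbmod]
      have : (w (kk q n k i) : ℤ) ≤ ((x - q * w i : ℕ) : ℤ) := by rw [hbc]; linarith
      exact_mod_cast this
/-- Closed formula for the Geil–Matsumoto bound in terms of the Apéry set: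
`GM_q(S) = 1 + (1/n)·Σ_{k=0}^{n-1} min_{1 ≤ i ≤ n-1} {qn, q·w(i) - w(k) + w(k_i)}`,
where `k_i := (k - iq) mod n`.  (Stated multiplied through by `n`:
`n·(GM_q(S) - 1) = Σ_k min{…}`, where `GM_q(S) - 1 = #(S \ (qS*+S))`.) -/
theorem stmt_10 (S : Set ℕ) (h0 : 0 ∈ S)
    (hadd : ∀ a ∈ S, ∀ b ∈ S, a + b ∈ S) (hfin : Sᶜ.Finite)
    (n : ℕ) (hn : n ∈ S) (hn0 : n ≠ 0)
    (q : ℕ) (hq : 1 ≤ q)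
    (w : ℕ → ℕ)
    (hw : ∀ i < n, w i ∈ S ∧ w i % n = i ∧ ∀ s ∈ S, s % n = i → w i ≤ s) :
    (n : ℤ) * (S \ {x | ∃ a ∈ S, a ≠ 0 ∧ ∃ b ∈ S, x = q * a + b}).ncard
      = ∑ k ∈ Finset.range n,
          (insert ((q : ℤ) * n)
            ((Finset.Icc 1 (n - 1)).image fun i =>
              (q : ℤ) * w i - w k + w ((((k : ℤ) - i * q) % n).toNat))).min'
            (Finset.insert_nonempty _ _) := by
  have hpos : 0 < n := Nat.pos_of_ne_zero hn0
  have hzpos : (0:ℤ) < n := by exact_mod_cast hpos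
  have hwmod : ∀ j < n, w j % n = j := fun j hj => (hw j hj).2.1
  suffices h : (n : ℤ) * (S \ {x | ∃ a ∈ S, a ≠ 0 ∧ ∃ b ∈ S, x = q * a + b}).ncard
      = ∑ k ∈ Finset.range n, mf q n w k by exact h
  set c : ℕ → ℕ := fun k => (mf q n w k / n).toNat with hc
  have hmc : ∀ k < n, mf q n w k = (n:ℤ) * c k := by
    intro k hk
    obtain ⟨d, hd⟩ := mf_dvd n hn0 q w hwmod hk
    have hnn := mf_nonneg S h0 hadd n hn hn0 q w hw hk
    have hd0 : 0 ≤ d := by nlinarith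
    have hdiv : mf q n w k / n = d := by rw [hd]; exact Int.mul_ediv_cancel_left d (by omega)
    simp only [hc, hdiv, Int.toNat_of_nonneg hd0]
    exact hd
  set B : Finset ℕ :=
    (Finset.range n).biUnion (fun k => (Finset.range (c k)).image (fun j => w k + j * n))
    with hB
  have himg_mod : ∀ k < n, ∀ j, (w k + j * n) % n = k := by
    intro k hk j
    rw [Nat.add_mul_mod_self_right, hwmod k hk]
  have hset : (S \ {x | ∃ a ∈ S, a ≠ 0 ∧ ∃ b ∈ S, x = q * a + b}) = ↑B := by
    ext x
    simp only [Set.mem_diff, Set.mem_setOf_eq, Finset.mem_coe, hB, Finset.mem_biUnion,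
      Finset.mem_image, Finset.mem_range]
    constructor
    · rintro ⟨hxS, hxT⟩
      set k := x % n with hkdef
      have hk : k < n := Nat.mod_lt x hpos
      have hwx : w k ≤ x := (mem_S_iff S h0 hadd n hn hn0 w hw x).mp hxS
      have hlt : (x:ℤ) < w k + mf q n w k := by
        by_contra hcon
        exact hxT ((memT_iff S h0 hadd n hn hn0 q hq w hw x).mpr (by push_neg at hcon; exact hcon))
      have hmeq : Nat.ModEq n (w k) x := by
        show w k % n = x % n
        simpa using hwmod k hk
      obtain ⟨j, hj⟩ := (Nat.modEq_iff_dvd' hwx).mp hmeq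
      have hxj : x = w k + j * n := by rw [mul_comm] at hj; omega
      refine ⟨k, hk, j, ?_, hxj.symm⟩
      have h1 : ((w k + j * n : ℕ) : ℤ) < w k + n * c k := by
        rw [← hxj, ← hmc k hk]; exact hlt
      push_cast at h1
      have h2 : (j:ℤ) * n < c k * n := by linarith
      have h3 : (j:ℤ) < c k := lt_of_mul_lt_mul_right h2 (le_of_lt hzpos)
      exact_mod_cast h3
    · rintro ⟨k, hk, j, hjc, rfl⟩
      have hmod := himg_mod k hk j
      constructor
      · rw [mem_S_iff S h0 hadd n hn hn0 w hw, hmod]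
        omega
      · intro hmem
        have ha1 := (memT_iff S h0 hadd n hn hn0 q hq w hw _).mp hmem
        rw [hmod, hmc k hk] at ha1
        have hjc' : (j:ℤ) < c k := by exact_mod_cast hjc
        have ha2 : (j:ℤ) * n < (c k : ℤ) * n := mul_lt_mul_of_pos_right hjc' hzpos
        have ha3 : ((w k + j * n : ℕ) : ℤ) = (w k : ℤ) + j * n := by push_cast; ring
        rw [ha3] at ha1
        nlinarith
  rw [hset, Set.ncard_coe_finset]
  have hcard : B.card = ∑ k ∈ Finset.range n, c k := by
    rw [hB, Finset.card_biUnion]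
    · refine Finset.sum_congr rfl (fun k hk => ?_)
      have hinj : Function.Injective (fun j => w k + j * n) := by
        intro j1 j2 hj
        simp only [] at hj
        exact Nat.eq_of_mul_eq_mul_right hpos (Nat.add_left_cancel hj)
      rw [Finset.card_image_of_injective _ hinj, Finset.card_range]
    · intro k1 h1 k2 h2 hne
      rw [Function.onFun, Finset.disjoint_left]
      rintro x hx1 hx2
      rw [Finset.mem_image] at hx1 hx2
      obtain ⟨j1, _, hj1⟩ := hx1
      obtain ⟨j2, _, hj2⟩ := hx2
      rw [Finset.mem_coe, Finset.mem_range] at h1 h2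
      exact hne (by rw [← himg_mod k1 h1 j1, hj1, ← hj2, himg_mod k2 h2 j2])
  rw [hcard]
  push_cast
  rw [Finset.mul_sum]
  exact Finset.sum_congr rfl (fun k hk => (hmc k (Finset.mem_range.mp hk)).symm)
end

section
/- Let a < b be coprime positive integers, S = ⟨a, b⟩, and q ≥ 1. Then GM_q(S) = 1 + Σ_{k=0}^{a-1} min{ q, ⌈(q-k)/a⌉·b }. -/
open Finset

set_option maxHeartbeats 1000000

private lemma aux_ceil_le (a q k : ℕ) (ha : 0 < a) (t : ℤ) :
    ⌈((q:ℚ) - k)/a⌉ ≤ t ↔ (q:ℤ) - k ≤ t * a := by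
  rw [Int.ceil_le, div_le_iff₀ (by exact_mod_cast ha : (0:ℚ) < a)]
  constructor <;> intro h <;> exact_mod_cast h

private lemma aux_count (q : ℕ) (M : ℤ) (hM : 0 ≤ M) :
    (((range q).filter (fun c : ℕ => (c:ℤ) < M)).card : ℤ) = min (q:ℤ) M := by
  have h1 : (range q).filter (fun c : ℕ => (c:ℤ) < M) = range (min q M.toNat) := by
    ext c
    simp only [mem_filter, mem_range, lt_min_iff]
    constructor
    · rintro ⟨u1, u2⟩; exact ⟨u1, Int.lt_toNat.mpr u2⟩
    · rintro ⟨u1, u2⟩; exact ⟨u1, Int.lt_toNat.mp u2⟩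
  rw [h1, card_range]
  omega

/-- Bras-Amorós–Vico-Oton: for coprime `a < b`,
`GM_q(⟨a,b⟩) = 1 + Σ_{k=0}^{a-1} min{q, ⌈(q-k)/a⌉·b}`. -/
theorem stmt_13 (a b : ℕ) (ha : 1 ≤ a) (hab : a < b) (hcop : Nat.Coprime a b)
    (S : Set ℕ) (hS : S = {x : ℕ | ∃ c d : ℕ, x = c * a + d * b})
    (q : ℕ) (hq : 1 ≤ q) :
    ((S \ {x | ∃ u ∈ S, u ≠ 0 ∧ ∃ v ∈ S, x = q * u + v}).ncard : ℤ) + 1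
      = 1 + ∑ k ∈ Finset.range a, min (q : ℤ) (⌈((q : ℚ) - k) / a⌉ * b) := by
  subst hS
  have ha0 : 0 < a := ha
  have hcopZ : IsCoprime (a:ℤ) (b:ℤ) := Nat.isCoprime_iff_coprime.mpr hcop
  -- notation for the ceiling
  set m : ℕ → ℤ := fun k => ⌈((q:ℚ) - k)/a⌉ with hm
  have hmle : ∀ (k : ℕ) (t : ℤ), m k ≤ t ↔ (q:ℤ) - k ≤ t * a := fun k t =>
    aux_ceil_le a q k ha0 t
  have hm0 : ∀ k : ℕ, k < a → 0 ≤ m k := by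
    intro k hk
    by_contra h
    push_neg at h
    have h1 : m k ≤ -1 := by omega
    have h2 := (hmle k (-1)).mp h1
    have hk' : (k:ℤ) < a := by exact_mod_cast hk
    have hq' : (1:ℤ) ≤ q := by exact_mod_cast hq
    omega
  have hma : ∀ k : ℕ, (q:ℤ) - k ≤ m k * a := fun k => (hmle k (m k)).mp le_rfl
  -- the finset realizing the complement
  set F : Finset ((_ : ℕ) × ℕ) :=
    (range a).sigma (fun d => (range q).filter (fun c : ℕ => (c:ℤ) < m d * b)) with hF
  set f : ((_ : ℕ) × ℕ) → ℕ := fun p => p.2 * a + p.1 * b with hf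
  have hFmem : ∀ d c : ℕ, (⟨d, c⟩ : (_ : ℕ) × ℕ) ∈ F ↔ d < a ∧ c < q ∧ (c:ℤ) < m d * b := by
    intro d c
    simp [hF, mem_sigma, mem_filter, mem_range, and_assoc]
  -- key cancellation lemma
  have hcancel : ∀ c d A B : ℕ, c * a + d * b = A * a + B * b →
      ∃ t : ℤ, (B:ℤ) - d = t * a ∧ (c:ℤ) = A + t * b := by
    intro c d A B he
    have he' : ((c:ℤ) - A) * a = ((B:ℤ) - d) * b := by
      have h : (c:ℤ) * a + d * b = A * a + B * b := by exact_mod_cast he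
      linear_combination h
    have hdvd : (a:ℤ) ∣ ((B:ℤ) - d) * b := ⟨(c:ℤ) - A, by linarith [he']⟩
    have hdvd2 : (a:ℤ) ∣ (B:ℤ) - d := hcopZ.dvd_of_dvd_mul_right hdvd
    obtain ⟨t, ht⟩ := hdvd2
    refine ⟨t, by linarith [ht], ?_⟩
    have haZ : (0:ℤ) < a := by exact_mod_cast ha0
    have h2 : ((c:ℤ) - A) * a = t * b * a := by rw [he', ht]; ring
    have h3 := mul_right_cancel₀ (ne_of_gt haZ) h2
    linarith
  -- the set equality
  have hset : ({x : ℕ | ∃ c d : ℕ, x = c * a + d * b} \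
      {x | ∃ u ∈ {x : ℕ | ∃ c d : ℕ, x = c * a + d * b}, u ≠ 0 ∧
        ∃ v ∈ {x : ℕ | ∃ c d : ℕ, x = c * a + d * b}, x = q * u + v})
      = ↑(F.image f) := by
    ext x
    simp only [Set.mem_diff, Set.mem_setOf_eq, Finset.coe_image, Set.mem_image,
      Finset.mem_coe]
    constructor
    · rintro ⟨⟨c₀, d₀, rfl⟩, hbad⟩
      set d := d₀ % a with hdd
      set c := c₀ + d₀ / a * b with hcc
      have hxZ : (c₀:ℤ) * a + d₀ * b = c * a + d * b := by
        rw [hcc, hdd]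
        push_cast
        linear_combination (-(b:ℤ)) * (Int.emod_add_mul_ediv (d₀:ℤ) (a:ℤ))
      have hx : c₀ * a + d₀ * b = c * a + d * b := by exact_mod_cast hxZ
      have hd' : d < a := Nat.mod_lt _ ha0
      refine ⟨⟨d, c⟩, ?_, hx.symm⟩
      rw [hFmem]
      refine ⟨hd', ?_, ?_⟩
      · -- c < q
        by_contra hcl
        push_neg at hcl
        refine hbad ⟨a, ⟨1, 0, by ring⟩, by omega, (c - q) * a + d * b, ⟨_, _, rfl⟩, ?_⟩
        zify [hcl]
        linear_combination hxZ
      · -- c < m(d)·b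
        by_contra h
        push_neg at h
        have h0 : 0 ≤ m d := hm0 d hd'
        set t : ℕ := (m d).toNat with htt
        have htb : t * b ≤ c := by
          have h5 : ((t:ℤ) * b : ℤ) ≤ c := by
            rw [htt, Int.toNat_of_nonneg h0]; exact h
          exact_mod_cast h5
        have hta : q ≤ d + t * a := by
          have h6 : (q:ℤ) ≤ d + t * a := by
            rw [htt, Int.toNat_of_nonneg h0]; linarith [hma d]
          exact_mod_cast h6
        refine hbad ⟨b, ⟨0, 1, by ring⟩, by omega,
          (c - t * b) * a + (d + t * a - q) * b, ⟨_, _, rfl⟩, ?_⟩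
        zify [htb, hta]
        linear_combination hxZ
    · rintro ⟨⟨d, c⟩, hp, rfl⟩
      rw [hFmem] at hp
      obtain ⟨hd, hcq, hcm⟩ := hp
      simp only [hf]
      refine ⟨⟨c, d, rfl⟩, ?_⟩
      rintro ⟨u, ⟨cu, du, rfl⟩, hu0, v, ⟨cv, dv, rfl⟩, hx⟩
      have hx' : c * a + d * b = (q * cu + cv) * a + (q * du + dv) * b := by
        rw [hx]; ring
      obtain ⟨t, ht1, ht2⟩ := hcancel c d (q * cu + cv) (q * du + dv) hx'
      rcases Nat.eq_zero_or_pos cu with hcu | hcu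
      · -- du ≥ 1 case : use the m-bound
        have hdu : 1 ≤ du := by
          rcases Nat.eq_zero_or_pos du with h | h
          · exact absurd (by simp [hcu, h]) hu0
          · exact h
        have hB : (q:ℤ) ≤ (q * du + dv : ℕ) := by
          push_cast
          have hduZ : (1:ℤ) ≤ du := by exact_mod_cast hdu
          have hqZ : (0:ℤ) ≤ q := by positivity
          have hdvZ : (0:ℤ) ≤ (dv:ℤ) := by positivity
          nlinarith [mul_le_mul_of_nonneg_left hduZ hqZ]
        have hmt : m d ≤ t := by
          rw [hmle]
          have h7 : (q:ℤ) - d ≤ ((q * du + dv : ℕ) : ℤ) - d := by linarith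
          linarith [ht1, h7]
        have h8 : m d * b ≤ t * b :=
          mul_le_mul_of_nonneg_right hmt (by positivity)
        have hA : (0:ℤ) ≤ ((q * cu + cv : ℕ) : ℤ) := by positivity
        linarith [hcm, ht2]
      · -- cu ≥ 1 case : c ≥ q
        have hA : (q:ℤ) ≤ ((q * cu + cv : ℕ) : ℤ) := by
          push_cast
          have hcuZ : (1:ℤ) ≤ cu := by exact_mod_cast hcu
          have hqZ : (0:ℤ) ≤ q := by positivity
          have hcvZ : (0:ℤ) ≤ (cv:ℤ) := by positivity
          nlinarith [mul_le_mul_of_nonneg_left hcuZ hqZ]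
        have haZ : (0:ℤ) < a := by exact_mod_cast ha0
        have hbZ : (0:ℤ) < b := by exact_mod_cast (by omega : 0 < b)
        rcases le_or_gt 0 t with h | h
        · have h9 : (q:ℤ) ≤ c := by
            linarith [ht2, hA, mul_nonneg h hbZ.le]
          have h9' : q ≤ c := by exact_mod_cast h9
          omega
        · have hdZ : (d:ℤ) < a := by exact_mod_cast hd
          have hB0 : (0:ℤ) ≤ ((q * du + dv : ℕ) : ℤ) := by positivity
          have h10 : t * a ≤ -a := by
            have h11 := mul_le_mul_of_nonneg_right (show t ≤ -1 by omega) haZ.le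
            linarith
          linarith [ht1, hB0, hdZ, h10]
  rw [hset, Set.ncard_coe_finset]
  have hinj : Set.InjOn f ↑F := by
    rintro ⟨d₁, c₁⟩ h₁ ⟨d₂, c₂⟩ h₂ he
    simp only [Finset.mem_coe] at h₁ h₂
    rw [hFmem] at h₁ h₂
    simp only [hf] at he
    have he' : c₁ * a + d₁ * b = c₂ * a + d₂ * b := he
    obtain ⟨t, ht1, ht2⟩ := hcancel c₁ d₁ c₂ d₂ he'
    have hd₂ : (d₂:ℤ) < a := by exact_mod_cast h₂.1
    have hta : (t * a : ℤ) = 0 := by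
      apply Int.eq_zero_of_abs_lt_dvd (⟨t, mul_comm _ _⟩ : (a:ℤ) ∣ t * a)
      rw [← ht1, abs_lt]
      constructor
      · have hp1 : (0:ℤ) ≤ d₂ := by positivity
        have hp2 : (d₁:ℤ) < a := by exact_mod_cast h₁.1
        linarith
      · have hp3 : (0:ℤ) ≤ d₁ := by positivity
        linarith
    have haZ : (a:ℤ) ≠ 0 := by exact_mod_cast (by omega : a ≠ 0)
    have ht0 : t = 0 := by
      rcases mul_eq_zero.mp hta with h | h
      · exact h
      · exact absurd h haZ
    subst ht0
    have hd : (d₂:ℤ) = d₁ := by linarith [ht1]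
    have hc : (c₁:ℤ) = c₂ := by linarith [ht2]
    have hd'' : d₁ = d₂ := by exact_mod_cast hd.symm
    have hc'' : c₁ = c₂ := by exact_mod_cast hc
    simp_all
  rw [Finset.card_image_of_injOn hinj, hF, Finset.card_sigma]
  push_cast
  rw [add_comm]
  congr 1
  apply Finset.sum_congr rfl
  intro k hk
  rw [aux_count q (m k * b) (mul_nonneg (hm0 k (mem_range.mp hk)) (by positivity))]
end

section
/- Let S = ⟨h₁, ..., h_t⟩ be a numerical semigroup with h₁ its multiplicity (least nonzero element) and q ≥ 1. Then GM_q(S) = L_q(S) = q·h₁ + 1 if and only if q·(h_i - h₁) ∈ S for every 2 ≤ i ≤ t. -/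
/-- Bras-Amorós–Vico-Oton: for `S = ⟨h₁,…,h_t⟩` with multiplicity `h₁`,
`GM_q(S) = L_q(S) = q·h₁ + 1` iff `q·(h_i - h₁) ∈ S` for every `i`. -/
theorem stmt_14 (t : ℕ) (h : Fin (t + 1) → ℕ) (hpos : ∀ j, 0 < h j)
    (S : Set ℕ)
    (hS : S = {x : ℕ | ∃ c : Fin (t + 1) → ℕ, x = ∑ j, c j * h j})
    (hfin : Sᶜ.Finite)
    (hmin : ∀ s ∈ S, s ≠ 0 → h 0 ≤ s)
    (q : ℕ) (hq : 1 ≤ q) :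
    (S \ {x | ∃ a ∈ S, a ≠ 0 ∧ ∃ b ∈ S, x = q * a + b}).ncard + 1 = q * h 0 + 1
      ↔ ∀ j : Fin (t + 1), q * (h j - h 0) ∈ S := by
  classical
  have hmemS : ∀ x, x ∈ S ↔ ∃ c : Fin (t + 1) → ℕ, x = ∑ j, c j * h j := by
    intro x; rw [hS]; rfl
  have hjS : ∀ j, h j ∈ S := by
    intro j
    refine (hmemS _).2 ⟨fun i => if i = j then 1 else 0, ?_⟩
    simp
  have addS : ∀ a ∈ S, ∀ b ∈ S, a + b ∈ S := by
    intro a ha b hb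
    obtain ⟨c, rfl⟩ := (hmemS a).1 ha
    obtain ⟨d, rfl⟩ := (hmemS b).1 hb
    refine (hmemS _).2 ⟨fun i => c i + d i, ?_⟩
    rw [← Finset.sum_add_distrib]
    exact Finset.sum_congr rfl fun i _ => (add_mul _ _ _).symm
  have mulS : ∀ (n : ℕ), ∀ a ∈ S, n * a ∈ S := by
    intro n a ha
    obtain ⟨c, rfl⟩ := (hmemS a).1 ha
    refine (hmemS _).2 ⟨fun i => n * c i, ?_⟩
    rw [Finset.mul_sum]
    exact Finset.sum_congr rfl fun i _ => (mul_assoc _ _ _).symm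
  have hge : ∀ j, h 0 ≤ h j := fun j => hmin _ (hjS j) (hpos j).ne'
  set T : Set ℕ := {x | ∃ a ∈ S, a ≠ 0 ∧ ∃ b ∈ S, x = q * a + b} with hT
  set D : Set ℕ := S \ T with hD
  set N := q * h 0 with hN
  have h0pos := hpos 0
  have Npos : 0 < N := Nat.mul_pos hq h0pos
  have NS : N ∈ S := mulS q _ (hjS 0)
  -- any nonzero element of S has a generator below it
  have sub_gen : ∀ a ∈ S, a ≠ 0 → ∃ j, h j ≤ a ∧ a - h j ∈ S := by
    intro a ha ha0
    obtain ⟨c, rfl⟩ := (hmemS a).1 ha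
    have hcj : ∃ j, c j ≠ 0 := by
      by_contra hc; push_neg at hc
      exact ha0 (by simp [hc])
    obtain ⟨j, hcj⟩ := hcj
    obtain ⟨k, hk⟩ := Nat.exists_eq_succ_of_ne_zero hcj
    have key : ∑ i, c i * h i = (∑ i, (if i = j then k else c i) * h i) + h j := by
      have e : ∀ i : Fin (t+1),
          c i * h i = (if i = j then k else c i) * h i + (if i = j then h j else 0) := by
        intro i
        by_cases hij : i = j
        · subst hij; simp [hk, Nat.succ_mul]
        · simp [hij]
      rw [Finset.sum_congr rfl fun i _ => e i, Finset.sum_add_distrib]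
      simp
    refine ⟨j, by omega, ?_⟩
    have e2 : (∑ i, c i * h i) - h j = ∑ i, (if i = j then k else c i) * h i := by omega
    rw [e2]
    exact (hmemS _).2 ⟨_, rfl⟩
  -- shifting by N lands in T
  have shiftT : ∀ x ∈ S, ∀ k : ℕ, x + N * (k + 1) ∈ T := by
    intro x hx k
    refine ⟨h 0, hjS 0, (hpos 0).ne', x + N * k, addS x hx _ (by rw [mul_comm]; exact mulS k N NS), ?_⟩
    rw [hN]; ring
  have key_lt : ∀ x ∈ D, ∀ y ∈ D, x % N = y % N → x < y → False := by
    intro x hx y hy hmod hlt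
    have hdvd : N ∣ y - x := (Nat.modEq_iff_dvd' hlt.le).1 hmod
    obtain ⟨k, hk⟩ := hdvd
    rcases k with _ | k
    · rw [mul_zero] at hk
      exact absurd (Nat.sub_eq_zero_iff_le.1 hk) (not_le.2 hlt)
    · have hy' : y = x + N * (k + 1) := by
        have := Nat.sub_add_cancel hlt.le
        linarith
      exact hy.2 (by rw [hy']; exact shiftT x hx.1 k)
  have injD : Set.InjOn (· % N) D := by
    intro x hx y hy hxy
    rcases lt_trichotomy x y with hlt | heq | hlt
    · exact absurd (key_lt x hx y hy hxy hlt) not_false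
    · exact heq
    · exact absurd (key_lt y hy x hx hxy.symm hlt) not_false
  have Dfin : D.Finite := by
    refine Set.Finite.of_finite_image (Set.Finite.subset (Set.finite_Iio N) ?_) injD
    rintro _ ⟨x, hx, rfl⟩
    exact Nat.mod_lt _ Npos
  set F := Dfin.toFinset with hF
  have hFD : ∀ x, x ∈ F ↔ x ∈ D := fun x => Set.Finite.mem_toFinset Dfin
  have hcardF : D.ncard = F.card := Set.ncard_eq_toFinset_card D Dfin
  set Fi := F.image (· % N) with hFi
  have hinj' : Fi.card = F.card := by
    apply Finset.card_image_of_injOn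
    intro x hx y hy hxy
    exact injD ((hFD x).1 hx) ((hFD y).1 hy) hxy
  have hsub : Fi ⊆ Finset.range N := by
    intro r hr
    obtain ⟨x, _, rfl⟩ := Finset.mem_image.1 hr
    exact Finset.mem_range.2 (Nat.mod_lt _ Npos)
  constructor
  · -- forward direction
    intro hcard j
    have hDcard : D.ncard = N := by omega
    have hFiN : Fi = Finset.range N :=
      Finset.eq_of_subset_of_card_le hsub (by rw [hinj', ← hcardF, hDcard, Finset.card_range])
    set d := h j - h 0 with hd
    have hr : (q * d) % N ∈ Fi := by
      rw [hFiN]; exact Finset.mem_range.2 (Nat.mod_lt _ Npos)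
    obtain ⟨x, hxF, hxmod⟩ := Finset.mem_image.1 hr
    have hxD : x ∈ D := (hFD x).1 hxF
    rcases le_or_gt x (q * d) with hle | hlt
    · have hdvd : N ∣ q * d - x := (Nat.modEq_iff_dvd' hle).1 hxmod
      obtain ⟨k, hk⟩ := hdvd
      have e : q * d = x + N * k := by
        have := Nat.sub_add_cancel hle
        linarith
      rw [show q * (h j - h 0) = q * d from rfl, e]
      exact addS x hxD.1 _ (by rw [mul_comm]; exact mulS k N NS)
    · exfalso
      have hdvd : N ∣ x - q * d := (Nat.modEq_iff_dvd' hlt.le).1 hxmod.symm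
      obtain ⟨k, hk⟩ := hdvd
      rcases k with _ | k
      · rw [mul_zero] at hk
        exact absurd (Nat.sub_eq_zero_iff_le.1 hk) (not_le.2 hlt)
      · have h1 : x = q * d + N * (k + 1) := by
          have := Nat.sub_add_cancel hlt.le
          linarith
        have h2 : q * d + N = q * h j := by
          rw [hd, hN, ← mul_add]
          congr 1
          have := hge j
          omega
        have h3 : N * (k + 1) = N * k + N := by ring
        have hx' : x = q * h j + N * k := by linarith
        exact hxD.2 ⟨h j, hjS j, (hpos j).ne', N * k,
          (by rw [mul_comm]; exact mulS k N NS), hx'⟩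
  · -- backward direction
    intro C
    have keyA : ∀ a ∈ S, a ≠ 0 → q * (a - h 0) ∈ S := by
      intro a ha ha0
      obtain ⟨j, hja, hjaS⟩ := sub_gen a ha ha0
      have e : a - h 0 = (a - h j) + (h j - h 0) := by
        have := hge j; omega
      rw [e, mul_add]
      exact addS _ (mulS q _ hjaS) _ (C j)
    obtain ⟨B, hB⟩ := hfin.bddAbove
    have hBS : ∀ x, B + 1 ≤ x → x ∈ S := by
      intro x hx
      by_contra hxS
      exact absurd (hB hxS) (by omega)
    have hsurj : Finset.range N ⊆ Fi := by
      intro r hrr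
      have hr : r < N := Finset.mem_range.1 hrr
      have hex : ∃ x, x ∈ S ∧ x % N = r := by
        refine ⟨r + (B + 1) * N, hBS _ ?_, ?_⟩
        · have : B + 1 ≤ (B + 1) * N := Nat.le_mul_of_pos_right (B + 1) Npos
          omega
        · rw [Nat.add_mul_mod_self_right]
          exact Nat.mod_eq_of_lt hr
      set m := Nat.find hex with hm
      obtain ⟨hmS, hmr⟩ := Nat.find_spec hex
      have hmD : m ∈ D := by
        refine ⟨hmS, ?_⟩
        rintro ⟨a, haS, ha0, b, hbS, heq⟩
        have hha : h 0 ≤ a := hmin a haS ha0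
        have e1 : q * (a - h 0) + q * h 0 = q * a := by
          rw [← mul_add]; congr 1; omega
        have hqa : q * h 0 ≤ q * a := Nat.mul_le_mul_left q hha
        have hNm : N ≤ m := by rw [hN]; linarith
        have hm'eq : m - N = q * (a - h 0) + b :=
          Nat.sub_eq_of_eq_add (by rw [hN]; linarith)
        have hm'S : m - N ∈ S := by
          rw [hm'eq]; exact addS _ (keyA a haS ha0) _ hbS
        have hm'r : (m - N) % N = r := by
          calc (m - N) % N = (m - N + N) % N := (Nat.add_mod_right _ _).symm
            _ = m % N := by rw [Nat.sub_add_cancel hNm]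
            _ = r := hmr
        have hlt : m - N < m := Nat.sub_lt (Npos.trans_le hNm) Npos
        exact Nat.find_min hex hlt ⟨hm'S, hm'r⟩
      exact Finset.mem_image.2 ⟨m, (hFD m).2 hmD, hmr⟩
    have hFiN : Fi = Finset.range N := Finset.Subset.antisymm hsub hsurj
    have : D.ncard = N := by
      rw [hcardF, ← hinj', hFiN, Finset.card_range]
    omega
end

section
/- Let S = ⟨n, n+1, ..., n+t⟩ with 1 ≤ t < n and q ≥ 1. Then GM_q(S) = L_q(S) if and only if q ∈ S, which holds if and only if (q mod n) ≤ ⌊q/n⌋·t. In particular, if q < n then GM_q(S) < L_q(S). -/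
private lemma aux_mem_iff (n t : ℕ) (ht1 : 1 ≤ t) (x : ℕ) :
    (∃ c : Fin (t + 1) → ℕ, x = ∑ i, c i * (n + i)) ↔
    ∃ k, k * n ≤ x ∧ x ≤ k * n + k * t := by
  have hgen : ∀ j, j ≤ t → ∃ c : Fin (t + 1) → ℕ, n + j = ∑ i, c i * (n + (i : ℕ)) := by
    intro j hj
    refine ⟨fun i => if i = ⟨j, by omega⟩ then 1 else 0, ?_⟩
    rw [Finset.sum_eq_single (⟨j, by omega⟩ : Fin (t + 1))]
    · simp
    · intro i _ hne; simp [hne]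
    · intro h; exact absurd (Finset.mem_univ _) h
  have hadd : ∀ x y : ℕ, (∃ c : Fin (t + 1) → ℕ, x = ∑ i, c i * (n + (i : ℕ))) →
      (∃ c : Fin (t + 1) → ℕ, y = ∑ i, c i * (n + (i : ℕ))) →
      ∃ c : Fin (t + 1) → ℕ, x + y = ∑ i, c i * (n + (i : ℕ)) := by
    rintro x y ⟨c, hc⟩ ⟨c', hc'⟩
    refine ⟨fun i => c i + c' i, ?_⟩
    simp only [add_mul, Finset.sum_add_distrib, ← hc, ← hc']
  have hsmul : ∀ m x : ℕ, (∃ c : Fin (t + 1) → ℕ, x = ∑ i, c i * (n + (i : ℕ))) →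
      ∃ c : Fin (t + 1) → ℕ, m * x = ∑ i, c i * (n + (i : ℕ)) := by
    intro m
    induction m with
    | zero => intro x _; exact ⟨0, by simp⟩
    | succ m ih =>
      intro x hx
      have h1 := hadd _ _ (ih x hx) hx
      rwa [show m * x + x = (m + 1) * x by ring] at h1
  constructor
  · rintro ⟨c, rfl⟩
    refine ⟨∑ i, c i, ?_, ?_⟩
    · rw [Finset.sum_mul]
      exact Finset.sum_le_sum fun i _ => Nat.mul_le_mul_left _ (Nat.le_add_right n i)
    · have h1 : (∑ i : Fin (t+1), c i) * n + (∑ i : Fin (t+1), c i) * t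
          = ∑ i : Fin (t+1), (c i * n + c i * t) := by
        rw [Finset.sum_add_distrib, Finset.sum_mul, Finset.sum_mul]
      rw [h1]
      refine Finset.sum_le_sum fun i _ => ?_
      have : (i : ℕ) ≤ t := Nat.lt_succ_iff.mp i.isLt
      calc c i * (n + (i : ℕ)) = c i * n + c i * (i : ℕ) := by ring
        _ ≤ c i * n + c i * t := by
            exact Nat.add_le_add_left (Nat.mul_le_mul_left _ this) _
  · rintro ⟨k, h1, h2⟩
    have ht0 : 0 < t := ht1
    obtain ⟨s, hx⟩ : ∃ s, x = k * n + s := ⟨x - k * n, by omega⟩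
    have hst : s ≤ k * t := by omega
    by_cases hku : k ≤ s / t
    · have h3 : k * t ≤ s := (Nat.le_div_iff_mul_le ht0).mp hku
      have hsk : s = k * t := le_antisymm hst h3
      obtain ⟨c, hc⟩ := hsmul k _ (hgen t le_rfl)
      refine ⟨c, ?_⟩
      rw [hx, hsk, ← mul_add]
      exact hc
    · push_neg at hku
      obtain ⟨u, v, huv, hvv⟩ : ∃ u v, u = s / t ∧ v = s % t := ⟨_, _, rfl, rfl⟩
      have hv : v < t := by rw [hvv]; exact Nat.mod_lt _ ht0
      have hdm : t * u + v = s := by rw [huv, hvv]; exact Nat.div_add_mod s t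
      obtain ⟨w, hw⟩ : ∃ w, k = u + 1 + w := ⟨k - u - 1, by omega⟩
      obtain ⟨c1, hc1⟩ := hsmul u _ (hgen t le_rfl)
      obtain ⟨c2, hc2⟩ := hgen v (le_of_lt hv)
      obtain ⟨c3, hc3⟩ := hsmul w _ (hgen 0 (Nat.zero_le t))
      obtain ⟨c, hc⟩ := hadd _ _ (hadd _ _ ⟨c1, hc1⟩ ⟨c2, hc2⟩) ⟨c3, hc3⟩
      refine ⟨c, ?_⟩
      rw [← hc, hx, ← hdm, hw]
      ring

private lemma aux_crit (n t : ℕ) (hn : 0 < n) (x : ℕ) :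
    (∃ k, k * n ≤ x ∧ x ≤ k * n + k * t) ↔ x % n ≤ x / n * t := by
  constructor
  · rintro ⟨k, h1, h2⟩
    have hk : k ≤ x / n := (Nat.le_div_iff_mul_le hn).mpr h1
    have h3 : k * n ≤ x / n * n := Nat.mul_le_mul_right n hk
    have h4 : k * t ≤ x / n * t := Nat.mul_le_mul_right t hk
    have h5 : x % n + x / n * n = x := Nat.mod_add_div' x n
    linarith
  · intro h
    refine ⟨x / n, Nat.div_mul_le_self x n, ?_⟩
    have h5 : x % n + x / n * n = x := Nat.mod_add_div' x n
    linarith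

private lemma aux_count_s15 (S Q : Set ℕ) (L : ℕ) (hL : 1 ≤ L)
    (hQlow : ∀ x ∈ Q, L ≤ x)
    (hbig : ∀ x ∈ S, L + L ≤ x → x ∈ Q)
    (hsub : ∀ x ∈ S, L ≤ x → x - L ∈ S → x ∈ Q) :
    (S \ Q).ncard ≤ L ∧
    ((∀ y, y < L → y ∉ S → (L + y ∈ S ∧ L + y ∉ Q)) → (S \ Q).ncard = L) ∧
    (∀ g, g < L → g ∉ S → L + g ∈ Q → (S \ Q).ncard < L) := by
  set T := S \ Q with hT
  set f : ℕ → ℕ := fun x => if x < L then x else x - L with hf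
  have hT1 : ∀ x ∈ T, x < L + L := by
    intro x hx
    by_contra h
    exact hx.2 (hbig x hx.1 (le_of_not_gt h))
  have hT2 : ∀ x ∈ T, L ≤ x → x - L ∉ S := by
    intro x hx h hmem
    exact hx.2 (hsub x hx.1 h hmem)
  have hTfin : T.Finite := (Set.finite_Iio (L + L)).subset (fun x hx => hT1 x hx)
  have hinj : Set.InjOn f T := by
    intro x hx y hy hxy
    simp only [hf] at hxy
    by_cases h1 : x < L <;> by_cases h2 : y < L
    · simpa [h1, h2] using hxy
    · rw [if_pos h1, if_neg h2] at hxy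
      exact absurd (hxy ▸ hx.1) (hT2 y hy (le_of_not_gt h2))
    · rw [if_neg h1, if_pos h2] at hxy
      exact absurd (hxy.symm ▸ hy.1) (hT2 x hx (le_of_not_gt h1))
    · rw [if_neg h1, if_neg h2] at hxy
      push_neg at h1 h2
      omega
  have himg : f '' T ⊆ Set.Iio L := by
    rintro _ ⟨x, hx, rfl⟩
    simp only [hf, Set.mem_Iio]
    split
    · assumption
    · have := hT1 x hx; omega
  have hIio : (Set.Iio L).ncard = L := by
    rw [show Set.Iio L = ↑(Finset.Iio L) from (Finset.coe_Iio L).symm,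
      Set.ncard_coe_finset, Nat.card_Iio]
  have hupper : T.ncard ≤ L := by
    calc T.ncard = (f '' T).ncard := (Set.ncard_image_of_injOn hinj).symm
      _ ≤ (Set.Iio L).ncard := Set.ncard_le_ncard himg (Set.finite_Iio L)
      _ = L := hIio
  refine ⟨hupper, ?_, ?_⟩
  · intro hgap
    have heq : f '' T = Set.Iio L := by
      refine subset_antisymm himg ?_
      intro y hy
      rw [Set.mem_Iio] at hy
      by_cases hyS : y ∈ S
      · refine ⟨y, ⟨hyS, fun hyQ => ?_⟩, by simp [hf, hy]⟩
        have := hQlow y hyQ; omega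
      · obtain ⟨h1, h2⟩ := hgap y hy hyS
        refine ⟨L + y, ⟨h1, h2⟩, ?_⟩
        simp only [hf]
        rw [if_neg (by omega)]
        omega
    calc T.ncard = (f '' T).ncard := (Set.ncard_image_of_injOn hinj).symm
      _ = L := by rw [heq, hIio]
  · intro g hgL hgS hgQ
    have himg2 : f '' T ⊆ Set.Iio L \ {g} := by
      rintro _ ⟨x, hx, rfl⟩
      refine ⟨himg ⟨x, hx, rfl⟩, ?_⟩
      simp only [hf, Set.mem_singleton_iff]
      by_cases hxL : x < L
      · rw [if_pos hxL]
        rintro rfl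
        exact hgS hx.1
      · rw [if_neg hxL]
        intro h
        have hxe : x = L + g := by omega
        exact hx.2 (hxe ▸ hgQ)
    have hgmem : g ∈ Set.Iio L := hgL
    have hcard : (Set.Iio L \ {g}).ncard = L - 1 := by
      rw [Set.ncard_diff_singleton_of_mem hgmem, hIio]
    have : T.ncard ≤ L - 1 := by
      calc T.ncard = (f '' T).ncard := (Set.ncard_image_of_injOn hinj).symm
        _ ≤ (Set.Iio L \ {g}).ncard :=
            Set.ncard_le_ncard himg2 ((Set.finite_Iio L).subset Set.diff_subset)
        _ = L - 1 := hcard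
    omega

/-- For `S = ⟨n, n+1, …, n+t⟩` with `1 ≤ t < n` and `q ≥ 1`:
`GM_q(S) = L_q(S)` iff `q ∈ S`, iff `(q mod n) ≤ ⌊q/n⌋·t`; and if `q < n`
then `GM_q(S) < L_q(S)`. -/
theorem stmt_15 (n t : ℕ) (ht1 : 1 ≤ t) (htn : t < n)
    (S : Set ℕ)
    (hS : S = {x : ℕ | ∃ c : Fin (t + 1) → ℕ, x = ∑ i, c i * (n + i)})
    (q : ℕ) (hq : 1 ≤ q) :
    ((S \ {x | ∃ a ∈ S, a ≠ 0 ∧ ∃ b ∈ S, x = q * a + b}).ncard + 1 = q * n + 1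
        ↔ q ∈ S) ∧
    (q ∈ S ↔ q % n ≤ q / n * t) ∧
    (q < n →
      (S \ {x | ∃ a ∈ S, a ≠ 0 ∧ ∃ b ∈ S, x = q * a + b}).ncard + 1 < q * n + 1) := by
  have hn : 0 < n := by omega
  have hn2 : 2 ≤ n := by omega
  have hmem : ∀ x, x ∈ S ↔ ∃ k, k * n ≤ x ∧ x ≤ k * n + k * t := by
    intro x
    rw [hS]
    exact aux_mem_iff n t ht1 x
  have hcrit : ∀ x, x ∈ S ↔ x % n ≤ x / n * t := by
    intro x
    rw [hmem x]
    exact aux_crit n t hn x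
  set Q : Set ℕ := {x | ∃ a ∈ S, a ≠ 0 ∧ ∃ b ∈ S, x = q * a + b} with hQdef
  -- basic facts
  have hge : ∀ a ∈ S, a ≠ 0 → n ≤ a := by
    intro a haS ha0
    obtain ⟨k, hk1, hk2⟩ := (hmem a).1 haS
    rcases Nat.eq_zero_or_pos k with h | h
    · subst h; simp at hk1 hk2; omega
    · calc n = 1 * n := (one_mul n).symm
        _ ≤ k * n := Nat.mul_le_mul_right n h
        _ ≤ a := hk1
  have hQlow : ∀ x ∈ Q, q * n ≤ x := by
    rintro x ⟨a, haS, ha0, b, hbS, rfl⟩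
    have han : n ≤ a := hge a haS ha0
    calc q * n ≤ q * a := Nat.mul_le_mul_left q han
      _ ≤ q * a + b := Nat.le_add_right _ _
  have hbig : ∀ x ∈ S, q * n + q * n ≤ x → x ∈ Q := by
    intro x hxS hbx
    have hsx : x % n ≤ x / n * t := (hcrit x).1 hxS
    obtain ⟨k, s, hks, hss⟩ : ∃ k s, k = x / n ∧ s = x % n := ⟨_, _, rfl, rfl⟩
    have hxe : x = k * n + s := by
      rw [hks, hss]
      have := Nat.mod_add_div' x n
      linarith
    have hst : s ≤ k * t := by rw [hks, hss]; exact hsx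
    have h2q : q + q ≤ k := by
      rw [hks]
      refine (Nat.le_div_iff_mul_le hn).mpr ?_
      calc (q + q) * n = q * n + q * n := add_mul q q n
        _ ≤ x := hbx
    obtain ⟨m, hm⟩ : ∃ m, k = q + m := ⟨k - q, by omega⟩
    have hmq : q ≤ m := by omega
    have hmt : m ≤ m * t := Nat.le_mul_of_pos_right m ht1
    by_cases hcase : s / q ≤ t
    · obtain ⟨u, r, hu, hr⟩ : ∃ u r, u = s / q ∧ r = s % q := ⟨_, _, rfl, rfl⟩
      have hus : q * u + r = s := by rw [hu, hr]; exact Nat.div_add_mod s q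
      have hrq : r < q := by rw [hr]; exact Nat.mod_lt _ hq
      have hut : u ≤ t := by rw [hu]; exact hcase
      refine ⟨n + u, (hmem _).2 ⟨1, by omega⟩, by omega, m * n + r,
        (hmem _).2 ⟨m, Nat.le_add_right _ _, Nat.add_le_add_left (by linarith) _⟩, ?_⟩
      have hexp : q * (n + u) + (m * n + r) = (q + m) * n + (q * u + r) := by ring
      rw [hexp, hus, ← hm, ← hxe]
    · have h6 : t + 1 ≤ s / q := by omega
      have h7 : (t + 1) * q ≤ s := (Nat.le_div_iff_mul_le hq).mp h6
      have h8 : q * t ≤ s := by nlinarith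
      obtain ⟨r, hrdef⟩ : ∃ r, s = q * t + r := ⟨s - q * t, by omega⟩
      have hrq : q ≤ r := by nlinarith
      have hrm : r ≤ m * t := by
        have hkt : (q + m) * t = q * t + m * t := add_mul _ _ _
        rw [hm] at hst
        linarith
      refine ⟨n + t, (hmem _).2 ⟨1, by omega⟩, by omega, m * n + r,
        (hmem _).2 ⟨m, Nat.le_add_right _ _, Nat.add_le_add_left hrm _⟩, ?_⟩
      have hexp : q * (n + t) + (m * n + r) = (q + m) * n + (q * t + r) := by ring
      rw [hexp, ← hrdef, ← hm, ← hxe]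
  have hnS : n ∈ S := (hmem n).2 ⟨1, by omega⟩
  have hsub : ∀ x ∈ S, q * n ≤ x → x - q * n ∈ S → x ∈ Q := by
    intro x hxS hle hmem'
    exact ⟨n, hnS, by omega, x - q * n, hmem', (Nat.add_sub_cancel' hle).symm⟩
  have hL1 : 1 ≤ q * n := Nat.mul_pos hq hn
  obtain ⟨hub, heqc, hltc⟩ := aux_count_s15 S Q (q * n) hL1 hQlow hbig hsub
  -- strict case witness
  have hqlt : q < q * n := by nlinarith
  have hqQ : q * n + q ∈ Q := by
    refine ⟨n + 1, (hmem _).2 ⟨1, by omega⟩, by omega, 0, (hmem _).2 ⟨0, by simp⟩, by ring⟩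
  have hstrict : q ∉ S → (S \ Q).ncard < q * n := fun hqS => hltc q hqlt hqS hqQ
  -- equality case
  have hqeq : q ∈ S → (S \ Q).ncard = q * n := by
    intro hqS
    refine heqc ?_
    intro y hyL hyS
    have hnq : n ≤ q := hge q hqS (by omega)
    constructor
    · refine (hmem _).2 ⟨q + y / n, ?_, ?_⟩
      · have h1 : y / n * n ≤ y := Nat.div_mul_le_self y n
        calc (q + y / n) * n = q * n + y / n * n := add_mul _ _ _
          _ ≤ q * n + y := by linarith
      · have h5 : y % n + y / n * n = y := Nat.mod_add_div' y n
        have h2 : y % n < n := Nat.mod_lt y hn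
        have h4 : q ≤ q * t := Nat.le_mul_of_pos_right q ht1
        have hexp : (q + y / n) * n + (q + y / n) * t
            = q * n + y / n * n + q * t + y / n * t := by ring
        rw [hexp]
        linarith [Nat.zero_le (y / n * t)]
    · rintro ⟨a, haS, ha0, b, hbS, heq⟩
      have han : n ≤ a := hge a haS ha0
      obtain ⟨d, hd⟩ : ∃ d, a = n + d := ⟨a - n, by omega⟩
      have h6 : q * n + y = q * n + (q * d + b) := by rw [heq, hd]; ring
      have h7 : y = q * d + b := Nat.add_left_cancel h6
      have hqd : q * d ∈ S := by
        obtain ⟨k, hk1, hk2⟩ := (hmem q).1 hqS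
        refine (hmem _).2 ⟨k * d, ?_, ?_⟩
        · have := Nat.mul_le_mul_right d hk1
          calc k * d * n = k * n * d := by ring
            _ ≤ q * d := this
        · have := Nat.mul_le_mul_right d hk2
          calc q * d ≤ (k * n + k * t) * d := this
            _ = k * d * n + k * d * t := by ring
      have hsum : q * d + b ∈ S := by
        obtain ⟨k, hk1, hk2⟩ := (hmem _).1 hqd
        obtain ⟨l, hl1, hl2⟩ := (hmem b).1 hbS
        refine (hmem _).2 ⟨k + l, ?_, ?_⟩
        · calc (k + l) * n = k * n + l * n := add_mul _ _ _
            _ ≤ q * d + b := Nat.add_le_add hk1 hl1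
        · calc q * d + b ≤ (k * n + k * t) + (l * n + l * t) := Nat.add_le_add hk2 hl2
            _ = (k + l) * n + (k + l) * t := by ring
      exact hyS (h7 ▸ hsum)
  have hqnotS_of_lt : q < n → q ∉ S := by
    intro hlt hqS
    have := (hcrit q).1 hqS
    rw [Nat.mod_eq_of_lt hlt, Nat.div_eq_of_lt hlt] at this
    simp at this
    omega
  refine ⟨⟨?_, ?_⟩, hcrit q, ?_⟩
  · intro h
    by_contra hqS
    have := hstrict hqS
    omega
  · intro hqS
    have := hqeq hqS
    omega
  · intro hlt
    have := hstrict (hqnotS_of_lt hlt)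
    omega
end

section
/- Let S = ⟨n, n+1, ..., n+t⟩ with 1 ≤ t < n and q ≥ 1. Then GM_q(S) = 1 + Σ_{k=0}^{n-1} min_{1 ≤ i ≤ t} { q, C_{k,i} }, where k_i := (k - iq) mod n and C_{k,i} := q - ⌈k/t⌉ + ⌈k_i/t⌉ + ⌈(iq - k)/n⌉. -/
namespace Stmt16

def SS (n t : ℕ) : Set ℕ := {x : ℕ | ∃ c : Fin (t + 1) → ℕ, x = ∑ i, c i * (n + i)}

def wA (n t k : ℕ) : ℕ := ((k + t - 1) / t) * n + k

def kres (n q k i : ℕ) : ℕ := (((k : ℤ) - i * q) % n).toNat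

def vA (n t q k i : ℕ) : ℕ := q * (n + i) + wA n t (kres n q k i)

def uA (n t q k : ℕ) : ℕ :=
  (Finset.range (t + 1)).inf' (Finset.nonempty_range_iff.mpr (Nat.succ_ne_zero t)) (vA n t q k)

def cnt (n t q k : ℕ) : ℕ := (uA n t q k - wA n t k) / n

/-- generators are in SS, with a shift -/
lemma gen_add_mem {n t i x : ℕ} (hi : i ≤ t) (hx : x ∈ SS n t) : (n + i) + x ∈ SS n t := by
  obtain ⟨c, rfl⟩ := hx
  refine ⟨fun j => c j + (if j = (⟨i, Nat.lt_succ_of_le hi⟩ : Fin (t+1)) then 1 else 0), ?_⟩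
  rw [show (fun j => c j + (if j = (⟨i, Nat.lt_succ_of_le hi⟩ : Fin (t+1)) then 1 else 0)) = _ from rfl]
  simp only [add_mul, Finset.sum_add_distrib, ite_mul, one_mul, zero_mul]
  rw [Finset.sum_ite_eq' Finset.univ]
  simp [add_comm]

lemma mem_SS_of_rep {n t : ℕ} (ht : 0 < t) : ∀ j e, e ≤ j * t → j * n + e ∈ SS n t := by
  intro j
  induction j with
  | zero => intro e he; simp at he; subst he; exact ⟨0, by simp⟩
  | succ j ih =>
    intro e he
    have h1 : e - min e t ≤ j * t := by
      rcases le_total e t with h | h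
      · simp [min_eq_left h]
      · rw [min_eq_right h]
        have : (j+1) * t = j * t + t := by ring
        omega
    have h2 := gen_add_mem (i := min e t) (min_le_right e t) (ih _ h1)
    have h3 : (n + min e t) + (j * n + (e - min e t)) = (j+1) * n + e := by
      have : (j+1) * n = j * n + n := by ring
      omega
    rwa [h3] at h2

lemma mem_SS_iff {n t x : ℕ} (ht : 0 < t) :
    x ∈ SS n t ↔ ∃ j e, e ≤ j * t ∧ x = j * n + e := by
  constructor
  · rintro ⟨c, rfl⟩
    refine ⟨∑ i, c i, ∑ i, c i * (i : ℕ), ?_, ?_⟩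
    · rw [Finset.sum_mul]
      exact Finset.sum_le_sum fun i _ => Nat.mul_le_mul_left _ (Nat.le_of_lt_succ i.isLt)
    · rw [Finset.sum_mul]
      rw [← Finset.sum_add_distrib]
      exact Finset.sum_congr rfl fun i _ => by ring
  · rintro ⟨j, e, he, rfl⟩
    exact mem_SS_of_rep ht j e he

lemma add_mem {n t x y : ℕ} (ht : 0 < t) (hx : x ∈ SS n t) (hy : y ∈ SS n t) :
    x + y ∈ SS n t := by
  rw [mem_SS_iff ht] at hx hy ⊢
  obtain ⟨j1, e1, he1, rfl⟩ := hx
  obtain ⟨j2, e2, he2, rfl⟩ := hy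
  refine ⟨j1 + j2, e1 + e2, ?_, by ring⟩
  have : (j1 + j2) * t = j1 * t + j2 * t := by ring
  omega

lemma nsmul_add_mem {n t a b : ℕ} (ht : 0 < t) (ha : a ∈ SS n t) (hb : b ∈ SS n t) :
    ∀ m : ℕ, m * a + b ∈ SS n t := by
  intro m
  induction m with
  | zero => simpa using hb
  | succ m ih =>
    have : (m + 1) * a + b = a + (m * a + b) := by ring
    rw [this]; exact add_mem ht ha ih

lemma wA_mod {n t k : ℕ} (hk : k < n) : wA n t k % n = k := by
  unfold wA
  rw [Nat.mul_add_mod' _ _ _]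
  exact Nat.mod_eq_of_lt hk

lemma le_wA_mul {t k : ℕ} (ht : 0 < t) : k ≤ ((k + t - 1) / t) * t := by
  have h := Nat.div_add_mod (k + t - 1) t
  have h2 : (k + t - 1) % t < t := Nat.mod_lt _ ht
  have h3 : t * ((k + t - 1) / t) = ((k + t - 1) / t) * t := Nat.mul_comm _ _
  omega

lemma mem_SS_iff_w {n t x : ℕ} (ht : 0 < t) (hn : 0 < n) :
    x ∈ SS n t ↔ wA n t (x % n) ≤ x := by
  constructor
  · rw [mem_SS_iff ht]
    rintro ⟨j, e, he, rfl⟩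
    set k := (j * n + e) % n with hk
    set c := (j * n + e) / n with hc
    have hkn : k < n := Nat.mod_lt _ hn
    have hx : j * n + e = n * c + k := (Nat.div_add_mod _ n).symm
    have hkt : k ≤ c * t := by
      rcases le_or_gt j c with h | h
      · have h1 : j * t ≤ c * t := Nat.mul_le_mul_right _ h
        have h2 : j * n ≤ c * n := Nat.mul_le_mul_right _ h
        have h3 : n * c = c * n := Nat.mul_comm _ _
        omega
      · have h2 : (c + 1) * n ≤ j * n := Nat.mul_le_mul_right _ h
        have h3 : (c+1) * n = c * n + n := by ring
        have h4 : n * c = c * n := Nat.mul_comm _ _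
        omega
    have hdiv : (k + t - 1) / t ≤ c := by
      have h6 : (k + t - 1) / t < c + 1 ↔ k + t - 1 < (c + 1) * t := Nat.div_lt_iff_lt_mul ht
      have h5 : (c+1) * t = c * t + t := by ring
      omega
    unfold wA
    have h7 := Nat.mul_le_mul_right n hdiv
    have h8 : n * c = c * n := Nat.mul_comm _ _
    omega
  · intro h
    have hkn : x % n < n := Nat.mod_lt _ hn
    have hmod : wA n t (x % n) % n = x % n := wA_mod hkn
    have hdvd : n ∣ x - wA n t (x % n) := by
      apply (Nat.modEq_iff_dvd' h).mp
      show wA n t (x % n) % n = x % n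
      rw [hmod]
    obtain ⟨m, hm⟩ := hdvd
    have hx : x = wA n t (x % n) + n * m := by omega
    rw [mem_SS_iff ht]
    refine ⟨(x % n + t - 1) / t + m, x % n, ?_, ?_⟩
    · have h1 := le_wA_mul (k := x % n) ht
      have h2 : ((x % n + t - 1) / t + m) * t = ((x % n + t - 1) / t) * t + m * t := by ring
      omega
    · unfold wA at hx
      have h3 : ((x % n + t - 1) / t + m) * n = ((x % n + t - 1) / t) * n + m * n := by ring
      have h4 : n * m = m * n := Nat.mul_comm _ _
      omega

lemma kres_lt {n q k i : ℕ} (hn : 0 < n) : kres n q k i < n := by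
  unfold kres
  have h0 : (0:ℤ) ≤ ((k:ℤ) - i * q) % n := Int.emod_nonneg _ (by exact_mod_cast hn.ne')
  have h1 : ((k:ℤ) - i * q) % n < n := Int.emod_lt_of_pos _ (by exact_mod_cast hn)
  omega

lemma kres_cast {n q k i : ℕ} (hn : 0 < n) : (kres n q k i : ℤ) = ((k:ℤ) - i * q) % n := by
  unfold kres
  have h0 : (0:ℤ) ≤ ((k:ℤ) - i * q) % n := Int.emod_nonneg _ (by exact_mod_cast hn.ne')
  omega

lemma kres_eq {n q k i : ℕ} (hn : 0 < n) :
    (kres n q k i : ℤ) = (k:ℤ) - i * q + n * (-(((k:ℤ) - i * q) / n)) := by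
  rw [kres_cast hn, Int.emod_def]; ring

lemma kres_zero {n q k : ℕ} (hk : k < n) : kres n q k 0 = k := by
  unfold kres
  simp only [Nat.cast_zero, zero_mul, sub_zero]
  rw [Int.emod_eq_of_lt (by positivity) (by exact_mod_cast hk)]
  simp

/-- key mod computation for vA -/
lemma vA_cast {n t q k i : ℕ} (hn : 0 < n) :
    (vA n t q k i : ℤ) = (k:ℤ) + n * ((q:ℤ) + ((kres n q k i + t - 1) / t : ℕ)
      + (-(((k:ℤ) - i * q) / n))) := by
  unfold vA wA
  push_cast
  rw [kres_eq hn]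
  push_cast
  ring

lemma vA_mod {n t q k i : ℕ} (hn : 0 < n) (hk : k < n) : vA n t q k i % n = k := by
  have h1 : ((vA n t q k i % n : ℕ) : ℤ) = ((vA n t q k i : ℤ)) % n := by push_cast; ring
  have h2 : ((vA n t q k i : ℤ)) % n = k := by
    rw [vA_cast hn, Int.add_mul_emod_self_left]
    exact Int.emod_eq_of_lt (by positivity) (by exact_mod_cast hk)
  omega

lemma uA_exists {n t q k : ℕ} : ∃ i ≤ t, uA n t q k = vA n t q k i := by
  obtain ⟨i, hi, h⟩ := Finset.exists_mem_eq_inf' (Finset.nonempty_range_iff.mpr (Nat.succ_ne_zero t)) (vA n t q k)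
  exact ⟨i, by simpa using Nat.lt_succ_iff.mp (Finset.mem_range.mp hi), h⟩

lemma uA_le {n t q k i : ℕ} (hi : i ≤ t) : uA n t q k ≤ vA n t q k i :=
  Finset.inf'_le _ (Finset.mem_range.mpr (Nat.lt_succ_of_le hi))

lemma uA_mod {n t q k : ℕ} (hn : 0 < n) (hk : k < n) : uA n t q k % n = k := by
  obtain ⟨i, hi, h⟩ := uA_exists (n := n) (t := t) (q := q) (k := k)
  rw [h]; exact vA_mod hn hk

lemma wA_mem {n t m : ℕ} (ht : 0 < t) (hn : 0 < n) (hm : m < n) : wA n t m ∈ SS n t := by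
  rw [mem_SS_iff_w ht hn]
  rw [wA_mod hm]

lemma gen_mem {n t i : ℕ} (ht : 0 < t) (hi : i ≤ t) : n + i ∈ SS n t := by
  rw [mem_SS_iff ht]
  exact ⟨1, i, by omega, by ring⟩

lemma vA_mem {n t q k i : ℕ} (ht : 0 < t) (hn : 0 < n) (hi : i ≤ t) : vA n t q k i ∈ SS n t :=
  nsmul_add_mem ht (gen_mem ht hi) (wA_mem ht hn (kres_lt hn)) q


def TT (n t q : ℕ) : Set ℕ := {x | ∃ a ∈ SS n t, a ≠ 0 ∧ ∃ b ∈ SS n t, x = q * a + b}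

lemma gen_decomp {n t a : ℕ} (ht : 0 < t) (ha : a ∈ SS n t) (h0 : a ≠ 0) :
    ∃ i ≤ t, ∃ s ∈ SS n t, a = (n + i) + s := by
  rw [mem_SS_iff ht] at ha
  obtain ⟨j, e, he, rfl⟩ := ha
  rcases j with _ | j'
  · simp at he; omega
  have hmt : (j' + 1) * t = j' * t + t := by ring
  have hmn : (j' + 1) * n = j' * n + n := by ring
  refine ⟨min e t, min_le_right _ _, j' * n + (e - min e t), ?_, ?_⟩
  · rw [mem_SS_iff ht]
    exact ⟨j', e - min e t, by omega, rfl⟩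
  · omega

lemma mem_TT_iff {n t q x : ℕ} (ht : 0 < t) (hn : 0 < n) :
    x ∈ TT n t q ↔ uA n t q (x % n) ≤ x := by
  constructor
  · rintro ⟨a, ha, h0, b, hb, rfl⟩
    obtain ⟨i, hit, s, hs, rfl⟩ := gen_decomp ht ha h0
    set b' := q * s + b with hb'def
    have hb'S : b' ∈ SS n t := nsmul_add_mem ht hs hb q
    have hx : q * ((n + i) + s) + b = q * (n + i) + b' := by rw [hb'def]; ring
    rw [hx]
    set k := (q * (n + i) + b') % n with hk
    have hmod : b' % n = kres n q k i := by
      have h1 : ((b' % n : ℕ) : ℤ) = (b' : ℤ) % n := by push_cast; ring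
      have h2 : (kres n q k i : ℤ) = ((k:ℤ) - i*q) % n := kres_cast hn
      have h3 : ((k : ℕ) : ℤ) = ((q * (n + i) + b' : ℕ) : ℤ) % n := by rw [hk]; push_cast; ring
      have e1 : ((k:ℤ) - i*q) % n = (((q * (n + i) + b' : ℕ) : ℤ) - i*q) % n := by
        rw [h3, Int.sub_emod, Int.emod_emod_of_dvd _ dvd_rfl, ← Int.sub_emod]
      have e2 : (((q * (n + i) + b' : ℕ) : ℤ) - i*q) = (b' : ℤ) + n * q := by push_cast; ring
      have e3 : ((b' : ℤ) + n * q) % n = (b' : ℤ) % n := by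
        rw [Int.add_mul_emod_self_left]
      rw [e2, e3] at e1
      omega
    have hge : wA n t (b' % n) ≤ b' := (mem_SS_iff_w ht hn).mp hb'S
    rw [hmod] at hge
    have h5 := uA_le (n := n) (t := t) (q := q) (k := k) hit
    unfold vA at h5
    omega
  · intro hle
    set k := x % n with hk
    have hkn : k < n := Nat.mod_lt _ hn
    obtain ⟨i, hit, hu⟩ := uA_exists (n := n) (t := t) (q := q) (k := k)
    rw [hu] at hle
    have hvmod : vA n t q k i % n = k := vA_mod hn hkn
    have hdvd : n ∣ x - vA n t q k i := by
      apply (Nat.modEq_iff_dvd' hle).mp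
      show vA n t q k i % n = x % n
      rw [hvmod]
    obtain ⟨m, hm⟩ := hdvd
    refine ⟨n + i, gen_mem ht hit, by omega, wA n t (kres n q k i) + m * n, ?_, ?_⟩
    · rw [mem_SS_iff_w ht hn]
      have hmm : (wA n t (kres n q k i) + m * n) % n = kres n q k i := by
        rw [Nat.add_mul_mod_self_right]
        exact wA_mod (kres_lt hn)
      rw [hmm]
      omega
    · have hv : vA n t q k i = q * (n + i) + wA n t (kres n q k i) := rfl
      have hc : n * m = m * n := Nat.mul_comm _ _
      omega

lemma uA_mem {n t q k : ℕ} (ht : 0 < t) (hn : 0 < n) : uA n t q k ∈ SS n t := by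
  obtain ⟨i, hit, hu⟩ := uA_exists (n := n) (t := t) (q := q) (k := k)
  rw [hu]; exact vA_mem ht hn hit

lemma wA_le_uA {n t q k : ℕ} (ht : 0 < t) (hn : 0 < n) (hk : k < n) :
    wA n t k ≤ uA n t q k := by
  have h := (mem_SS_iff_w ht hn).mp (uA_mem (q := q) (k := k) ht hn)
  rwa [uA_mod hn hk] at h

lemma uA_eq {n t q k : ℕ} (ht : 0 < t) (hn : 0 < n) (hk : k < n) :
    uA n t q k = wA n t k + cnt n t q k * n := by
  have h1 : uA n t q k % n = k := uA_mod hn hk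
  have h2 : wA n t k % n = k := wA_mod hk
  have hle := wA_le_uA (q := q) ht hn hk
  have hdvd : n ∣ uA n t q k - wA n t k := by
    apply (Nat.modEq_iff_dvd' hle).mp
    show wA n t k % n = uA n t q k % n
    rw [h1, h2]
  obtain ⟨m, hm⟩ := hdvd
  have hc : cnt n t q k = m := by
    unfold cnt
    rw [hm]
    exact Nat.mul_div_cancel_left m hn
  rw [hc] at *
  have hcomm : n * m = m * n := Nat.mul_comm _ _
  omega


lemma x_mod {n t k m : ℕ} (hk : k < n) : (wA n t k + m * n) % n = k := by
  rw [Nat.add_mul_mod_self_right]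
  exact wA_mod hk

lemma diff_eq {n t q : ℕ} (ht : 0 < t) (hn : 0 < n) :
    SS n t \ TT n t q =
      ↑((Finset.range n).biUnion fun k =>
        (Finset.range (cnt n t q k)).image fun m => wA n t k + m * n) := by
  ext x
  simp only [Set.mem_diff, Finset.coe_biUnion, Set.mem_iUnion, Finset.mem_coe,
    Finset.mem_image, Finset.mem_range, exists_prop]
  constructor
  · rintro ⟨hxS, hxT⟩
    set k := x % n with hkdef
    have hkn : k < n := Nat.mod_lt _ hn
    have hw : wA n t k ≤ x := (mem_SS_iff_w ht hn).mp hxS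
    have hu : ¬ uA n t q k ≤ x := fun h => hxT ((mem_TT_iff ht hn).mpr h)
    have hue := uA_eq (q := q) ht hn hkn
    have hdvd : n ∣ x - wA n t k := by
      apply (Nat.modEq_iff_dvd' hw).mp
      show wA n t k % n = x % n
      rw [wA_mod hkn]
    obtain ⟨m, hm⟩ := hdvd
    have hcm : n * m = m * n := Nat.mul_comm _ _
    refine ⟨k, hkn, m, ?_, by omega⟩
    have h1 : n * m < n * cnt n t q k := by
      have : cnt n t q k * n = n * cnt n t q k := Nat.mul_comm _ _
      omega
    exact Nat.lt_of_mul_lt_mul_left h1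
  · rintro ⟨k, hkn, m, hm, rfl⟩
    have hmod : (wA n t k + m * n) % n = k := x_mod hkn
    constructor
    · rw [mem_SS_iff_w ht hn, hmod]
      omega
    · rw [mem_TT_iff ht hn, hmod]
      have hue := uA_eq (q := q) ht hn hkn
      have h1 : m * n < cnt n t q k * n := (Nat.mul_lt_mul_right hn).mpr hm
      omega

lemma ncard_eq {n t q : ℕ} (ht : 0 < t) (hn : 0 < n) :
    (SS n t \ TT n t q).ncard = ∑ k ∈ Finset.range n, cnt n t q k := by
  rw [diff_eq ht hn, Set.ncard_coe_finset]
  rw [Finset.card_biUnion]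
  · refine Finset.sum_congr rfl fun k hk => ?_
    rw [Finset.card_image_of_injective _ fun a b h => ?_, Finset.card_range]
    have : a * n = b * n := by omega
    exact Nat.eq_of_mul_eq_mul_right hn this
  · intro k1 h1 k2 h2 hne
    rw [Function.onFun, Finset.disjoint_left]
    rintro x hx1 hx2
    simp only [Finset.mem_image, Finset.mem_range] at hx1 hx2
    obtain ⟨m1, _, he1⟩ := hx1
    obtain ⟨m2, _, he2⟩ := hx2
    apply hne
    have e1 : x % n = k1 := by rw [← he1]; exact x_mod (Finset.mem_range.mp h1)
    have e2 : x % n = k2 := by rw [← he2]; exact x_mod (Finset.mem_range.mp h2)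
    omega


lemma neg_ediv (a b : ℕ) (hb : 0 < b) : (-(a:ℤ)) / b = -(((a + b - 1) / b : ℕ) : ℤ) := by
  have h1 : a ≤ ((a + b - 1) / b) * b := le_wA_mul hb
  have h2 : ((a + b - 1) / b) * b ≤ a + b - 1 := Nat.div_mul_le_self _ _
  set d := (a + b - 1) / b with hd
  have h1' : (a : ℤ) ≤ (d : ℤ) * b := by exact_mod_cast h1
  have h2' : (d : ℤ) * b ≤ (a : ℤ) + b - 1 := by
    have : ((d * b : ℕ) : ℤ) ≤ ((a + b - 1 : ℕ) : ℤ) := by exact_mod_cast h2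
    push_cast at this
    omega
  have key : (-(a:ℤ)) = ((d : ℤ) * b - a) + b * (-(d:ℤ)) := by ring
  rw [key, Int.add_mul_ediv_left _ _ (by exact_mod_cast hb.ne' : (b:ℤ) ≠ 0)]
  rw [Int.ediv_eq_zero_of_lt (by omega) (by omega)]
  ring

lemma ceil_nat_div (a b : ℕ) (hb : 0 < b) : ⌈(a : ℚ) / b⌉ = (((a + b - 1) / b : ℕ) : ℤ) := by
  rw [show ((a:ℚ) / b) = -(((-(a:ℤ) : ℤ) : ℚ) / ((b : ℕ) : ℚ)) by push_cast; ring]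
  rw [Int.ceil_neg, Rat.floor_intCast_div_natCast, neg_ediv a b hb, neg_neg]

lemma ceil_sub (k i q n : ℕ) : ⌈((i:ℚ) * q - k) / n⌉ = -(((k:ℤ) - i * q) / n) := by
  rw [show ((i:ℚ) * q - k) / n = -(((((k:ℤ) - i * q) : ℤ) : ℚ) / ((n : ℕ) : ℚ)) by push_cast; ring]
  rw [Int.ceil_neg, Rat.floor_intCast_div_natCast]

lemma cast_inf' (s : Finset ℕ) (hs : s.Nonempty) (f : ℕ → ℕ) :
    ((s.inf' hs f : ℕ) : ℤ) = s.inf' hs fun i => (f i : ℤ) := by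
  apply le_antisymm
  · apply Finset.le_inf'
    intro i hi
    exact_mod_cast Finset.inf'_le f hi
  · obtain ⟨i, hi, h⟩ := Finset.exists_mem_eq_inf' hs f
    rw [h]
    exact Finset.inf'_le _ hi

lemma inf'_add_mul (s : Finset ℕ) (hs : s.Nonempty) (a c : ℤ) (hc : 0 < c) (g : ℕ → ℤ) :
    (s.inf' hs fun i => a + c * g i) = a + c * s.inf' hs g := by
  apply le_antisymm
  · obtain ⟨i, hi, h⟩ := Finset.exists_mem_eq_inf' hs g
    rw [h]
    exact Finset.inf'_le _ hi
  · apply Finset.le_inf'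
    intro i hi
    have h1 := Finset.inf'_le g hi
    have := mul_le_mul_of_nonneg_left h1 hc.le
    omega

lemma inf'_min_const (s : Finset ℕ) (hs : s.Nonempty) (a : ℤ) (g : ℕ → ℤ) :
    (s.inf' hs fun i => min a (g i)) = min a (s.inf' hs g) := by
  apply le_antisymm
  · obtain ⟨i, hi, h⟩ := Finset.exists_mem_eq_inf' hs g
    calc (s.inf' hs fun i => min a (g i)) ≤ min a (g i) := Finset.inf'_le _ hi
      _ = min a (s.inf' hs g) := by rw [h]
  · apply Finset.le_inf'
    intro i hi
    exact min_le_min le_rfl (Finset.inf'_le g hi)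

/-- the integer value of `C_{k,i}` -/
def gZ (n t q k i : ℕ) : ℤ :=
  (q : ℤ) - (((k + t - 1) / t : ℕ) : ℤ) + (((kres n q k i + t - 1) / t : ℕ) : ℤ)
    + (-(((k:ℤ) - i * q) / n))

lemma vA_eq_gZ {n t q k i : ℕ} (hn : 0 < n) :
    (vA n t q k i : ℤ) = (wA n t k : ℤ) + n * gZ n t q k i := by
  rw [vA_cast hn]
  unfold wA gZ
  push_cast
  ring

lemma gZ_zero {n t q k : ℕ} (hn : 0 < n) (hk : k < n) : gZ n t q k 0 = q := by
  unfold gZ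
  rw [kres_zero hk]
  simp only [Nat.cast_zero, zero_mul, sub_zero]
  rw [Int.ediv_eq_zero_of_lt (by positivity) (by exact_mod_cast hk)]
  ring

lemma cnt_cast {n t q k : ℕ} (ht : 0 < t) (hn : 0 < n) (hk : k < n) :
    (cnt n t q k : ℤ) = (Finset.Icc 1 t).inf' (Finset.nonempty_Icc.mpr ht)
      (fun i => min (q : ℤ) (gZ n t q k i)) := by
  have hne : (Finset.range (t + 1)).Nonempty := Finset.nonempty_range_iff.mpr (Nat.succ_ne_zero t)
  have h1 : (uA n t q k : ℤ) = (Finset.range (t + 1)).inf' hne fun i => (vA n t q k i : ℤ) :=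
    cast_inf' _ hne _
  have h2 : ((Finset.range (t + 1)).inf' hne fun i => (vA n t q k i : ℤ))
      = (Finset.range (t + 1)).inf' hne fun i => (wA n t k : ℤ) + n * gZ n t q k i :=
    Finset.inf'_congr hne rfl (fun i _ => vA_eq_gZ hn)
  rw [h2, inf'_add_mul _ hne _ _ (by exact_mod_cast hn)] at h1
  have h3 := uA_eq (q := q) ht hn hk
  have h4 : (n : ℤ) * cnt n t q k = (n:ℤ) * ((Finset.range (t + 1)).inf' hne (gZ n t q k)) := by
    have h5 : (uA n t q k : ℤ) = (wA n t k : ℤ) + (cnt n t q k : ℤ) * n := by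
      exact_mod_cast h3
    have hcm : (cnt n t q k : ℤ) * n = (n : ℤ) * cnt n t q k := mul_comm _ _
    omega
  have h6 : (cnt n t q k : ℤ) = (Finset.range (t + 1)).inf' hne (gZ n t q k) :=
    mul_left_cancel₀ (by exact_mod_cast hn.ne' : (n:ℤ) ≠ 0) h4
  rw [h6]
  have hins : Finset.range (t + 1) = insert 0 (Finset.Icc 1 t) := by
    ext a; simp [Finset.mem_range, Finset.mem_Icc]; omega
  have hicc : (Finset.Icc 1 t).Nonempty := Finset.nonempty_Icc.mpr ht
  have h7 : ((Finset.range (t + 1)).inf' hne (gZ n t q k))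
      = ((insert 0 (Finset.Icc 1 t)).inf' (hins ▸ hne) (gZ n t q k)) := by
    congr 1
  have h8 : ((insert 0 (Finset.Icc 1 t)).inf' (Finset.insert_nonempty _ _) (gZ n t q k))
      = gZ n t q k 0 ⊓ (Finset.Icc 1 t).inf' hicc (gZ n t q k) :=
    Finset.inf'_insert hicc (gZ n t q k)
  rw [h7, h8, gZ_zero hn hk]
  exact (inf'_min_const (Finset.Icc 1 t) hicc ((q : ℤ)) (gZ n t q k)).symm


lemma gZ_eq {n t q k : ℕ} (ht : 0 < t) (i : ℕ) :
    gZ n t q k i = (q : ℤ) - ⌈(k : ℚ) / t⌉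
      + ⌈(((((k : ℤ) - i * q) % n).toNat : ℚ)) / t⌉
      + ⌈((i : ℚ) * q - k) / n⌉ := by
  rw [ceil_nat_div k t ht, ceil_sub k i q n,
    show ((((k : ℤ) - i * q) % n).toNat) = kres n q k i from rfl,
    ceil_nat_div (kres n q k i) t ht]
  rfl

end Stmt16




/-- For `S = ⟨n, n+1, …, n+t⟩` with `1 ≤ t < n` and `q ≥ 1`:
`GM_q(S) = 1 + Σ_{k=0}^{n-1} min_{1 ≤ i ≤ t} {q, C_{k,i}}`, where
`k_i := (k - iq) mod n` and `C_{k,i} := q - ⌈k/t⌉ + ⌈k_i/t⌉ + ⌈(iq - k)/n⌉`. -/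
theorem stmt_16 (n t : ℕ) (ht1 : 1 ≤ t) (htn : t < n)
    (S : Set ℕ)
    (hS : S = {x : ℕ | ∃ c : Fin (t + 1) → ℕ, x = ∑ i, c i * (n + i)})
    (q : ℕ) (hq : 1 ≤ q) :
    ((S \ {x | ∃ a ∈ S, a ≠ 0 ∧ ∃ b ∈ S, x = q * a + b}).ncard : ℤ) + 1
      = 1 + ∑ k ∈ Finset.range n,
          (Finset.Icc 1 t).inf' (Finset.nonempty_Icc.mpr ht1) (fun i =>
            min (q : ℤ)
              ((q : ℤ) - ⌈(k : ℚ) / t⌉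
                + ⌈(((((k : ℤ) - i * q) % n).toNat : ℚ)) / t⌉
                + ⌈((i : ℚ) * q - k) / n⌉)) := by
  have hn : 0 < n := by omega
  have hSS : S = Stmt16.SS n t := hS
  subst hSS
  have hTT : {x : ℕ | ∃ a ∈ Stmt16.SS n t, a ≠ 0 ∧ ∃ b ∈ Stmt16.SS n t, x = q * a + b}
      = Stmt16.TT n t q := rfl
  rw [hTT, Stmt16.ncard_eq ht1 hn, Nat.cast_sum, add_comm]
  congr 1
  refine Finset.sum_congr rfl fun k hk => ?_
  rw [Stmt16.cnt_cast ht1 hn (Finset.mem_range.mp hk)]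
  exact Finset.inf'_congr (Finset.nonempty_Icc.mpr ht1) rfl
    (fun i _ => by rw [Stmt16.gZ_eq (n := n) (q := q) (k := k) ht1 i])
end

section
/- Let q ≥ 2, 1 ≤ t < n, 1 ≤ i ≤ t, and 1 ≤ k ≤ t. Set k_i := (k - iq) mod n and C_{k,i} := q - ⌈k/t⌉ + ⌈k_i/t⌉ + ⌈(iq - k)/n⌉. Then min_{1 ≤ i ≤ t} { q, C_{k,i} } equals q - 1 if q divides k, and equals q otherwise. -/
/-- Proposition (case `1 ≤ k ≤ t`): with `q ≥ 2`, `1 ≤ t < n`,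
`k_i := (k - iq) mod n` and `C_{k,i} := q - ⌈k/t⌉ + ⌈k_i/t⌉ + ⌈(iq - k)/n⌉`,
`min_{1 ≤ i ≤ t} {q, C_{k,i}}` equals `q - 1` if `q ∣ k` and `q` otherwise. -/
theorem stmt_17 (q n t k : ℕ) (hq : 2 ≤ q) (ht1 : 1 ≤ t) (htn : t < n)
    (hk1 : 1 ≤ k) (hkt : k ≤ t) :
    (Finset.Icc 1 t).inf' (Finset.nonempty_Icc.mpr ht1) (fun i =>
      min (q : ℤ)
        ((q : ℤ) - ⌈(k : ℚ) / t⌉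
          + ⌈(((((k : ℤ) - i * q) % n).toNat : ℚ)) / t⌉
          + ⌈((i : ℚ) * q - k) / n⌉))
      = if q ∣ k then (q : ℤ) - 1 else (q : ℤ) := by
  have ht0 : (0:ℚ) < (t:ℚ) := by exact_mod_cast ht1
  have hn0 : (0:ℤ) < (n:ℤ) := by exact_mod_cast le_trans ht1 htn.le
  have hn0' : (0:ℚ) < (n:ℚ) := by exact_mod_cast hn0
  have hkn : (k:ℚ) < (n:ℚ) := by exact_mod_cast hkt.trans_lt htn
  have hceil_kt : ⌈(k : ℚ) / t⌉ = 1 := by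
    rw [Int.ceil_eq_iff]
    constructor
    · have hk0 : (0:ℚ) < (k:ℚ) := by exact_mod_cast hk1
      have : (0:ℚ) < (k:ℚ)/t := by positivity
      push_cast
      linarith
    · push_cast
      rw [div_le_one ht0]
      exact_mod_cast hkt
  have hA : ∀ i : ℕ, 0 ≤ ⌈(((((k : ℤ) - i * q) % n).toNat : ℚ)) / t⌉ := by
    intro i
    exact Int.ceil_nonneg (by positivity)
  have hB : ∀ i : ℕ, 0 ≤ ⌈((i : ℚ) * q - k) / n⌉ := by
    intro i
    have h1 : (-1 : ℚ) < ((i : ℚ) * q - k) / n := by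
      rw [lt_div_iff₀ hn0']
      have h2 : (0:ℚ) ≤ (i:ℚ) * q := by positivity
      nlinarith
    have := Int.lt_ceil.mpr (show ((-1 : ℤ) : ℚ) < ((i : ℚ) * q - k) / n by exact_mod_cast h1)
    omega
  have hsum : ∀ i : ℕ, ¬ q ∣ k →
      1 ≤ ⌈(((((k : ℤ) - i * q) % n).toNat : ℚ)) / t⌉ + ⌈((i : ℚ) * q - k) / n⌉ := by
    intro i hnd
    by_contra h
    have hA0 : ⌈(((((k : ℤ) - i * q) % n).toNat : ℚ)) / t⌉ = 0 := by
      have := hA i; have := hB i; omega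
    have hB0 : ⌈((i : ℚ) * q - k) / n⌉ = 0 := by
      have := hA i; have := hB i; omega
    -- from hB0 : i*q ≤ k
    have h1 : ((i : ℚ) * q - k) / n ≤ ((0:ℤ):ℚ) := Int.ceil_le.mp hB0.le
    have h2 : (i:ℚ) * q ≤ k := by
      rw [div_le_iff₀ hn0'] at h1
      push_cast at h1
      linarith
    have h3 : (i:ℤ) * q ≤ (k:ℤ) := by exact_mod_cast h2
    -- so 0 ≤ k - i*q < n, hence (k - i*q) % n = k - i*q
    have hk_lt : (k:ℤ) < (n:ℤ) := by exact_mod_cast hkt.trans_lt htn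
    have hiq0 : (0:ℤ) ≤ (i:ℤ) * q := by positivity
    have h4 : ((k:ℤ) - i * q) % n = (k:ℤ) - i * q :=
      Int.emod_eq_of_lt (by linarith) (by linarith)
    -- from hA0 : the toNat is 0
    have h5 : (((((k : ℤ) - i * q) % n).toNat : ℚ)) / t ≤ ((0:ℤ):ℚ) := Int.ceil_le.mp hA0.le
    have h6 : (((((k : ℤ) - i * q) % n).toNat : ℚ)) ≤ 0 := by
      rw [div_le_iff₀ ht0] at h5
      push_cast at h5
      linarith
    have h7 : ((((k : ℤ) - i * q) % n).toNat : ℕ) = 0 := by exact_mod_cast h6.antisymm (by positivity)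
    have h8 : ((k:ℤ) - i * q) % n = 0 := by omega
    have h9 : (k:ℤ) = i * q := by omega
    have h10 : k = i * q := by exact_mod_cast h9
    exact hnd ⟨i, by rw [h10, mul_comm]⟩
  by_cases hdvd : q ∣ k
  · rw [if_pos hdvd]
    obtain ⟨i₀, hi₀⟩ := hdvd
    have hi₀1 : 1 ≤ i₀ := by nlinarith
    have hi₀t : i₀ ≤ t := by nlinarith
    apply le_antisymm
    · apply le_trans (Finset.inf'_le _ (show i₀ ∈ Finset.Icc 1 t by
        simp [Finset.mem_Icc, hi₀1, hi₀t]))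
      have e1 : ((k:ℤ) - i₀ * q) = 0 := by
        have : (k:ℤ) = q * i₀ := by exact_mod_cast hi₀
        linarith [this, mul_comm (i₀:ℤ) (q:ℤ)]
      have e2 : ((i₀ : ℚ) * q - k) = 0 := by
        have : (k:ℚ) = q * i₀ := by exact_mod_cast hi₀
        linarith [this, mul_comm (i₀:ℚ) (q:ℚ)]
      simp only [e1, e2, Int.zero_emod, Int.toNat_zero, Nat.cast_zero, zero_div,
        Int.ceil_zero, add_zero, hceil_kt]
      have : min (q:ℤ) ((q:ℤ) - 1) = (q:ℤ) - 1 := min_eq_right (by omega)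
      rw [this]
    · apply Finset.le_inf'
      intro i _
      refine le_min (by omega) ?_
      rw [hceil_kt]
      have := hA i
      have := hB i
      omega
  · rw [if_neg hdvd]
    apply le_antisymm
    · refine le_trans (Finset.inf'_le _ (show 1 ∈ Finset.Icc 1 t by
        simp [Finset.mem_Icc, ht1])) ?_
      exact min_le_left _ _
    · apply Finset.le_inf'
      intro i _
      refine le_min le_rfl ?_
      rw [hceil_kt]
      have := hsum i hdvd
      omega
end

section
/- Let q ≥ 2 and S = ⟨n, n+1, ..., n+t⟩ with ⌈(n-1)/2⌉ ≤ t < n, t ≠ 1, and q ≤ t + 1. Then GM_q(S) = 3 + (q-1)·n - ⌈n/q⌉ + t. -/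
lemma single_sum (n t : ℕ) (j : Fin (t+1)) (a : ℕ) :
    ∑ i, (Pi.single j a : Fin (t+1) → ℕ) i * (n + i) = a * (n + j) := by
  rw [Finset.sum_eq_single j]
  · simp
  · intro b _ hb; simp [Pi.single_eq_of_ne hb]
  · simp

lemma repr_lemma (n t k r : ℕ) (ht : 1 ≤ t) (hr : r ≤ k * t) :
    ∃ c : Fin (t + 1) → ℕ, k * n + r = ∑ i, c i * (n + i) := by
  set d := r / t with hd
  set m := r % t with hm
  have hdm : d * t + m = r := by rw [hd, hm, Nat.mul_comm]; exact Nat.div_add_mod r t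
  have hmt : m < t := Nat.mod_lt _ ht
  have hdk : d ≤ k := by
    have := Nat.div_le_div_right (c := t) hr
    simpa [Nat.mul_div_cancel _ ht] using this
  have hkt : k * t = t * k := Nat.mul_comm _ _
  have hdt : d * t = t * d := Nat.mul_comm _ _
  rcases eq_or_lt_of_le hdk with he | hlt
  · refine ⟨Pi.single (Fin.last t) k, ?_⟩
    rw [single_sum]
    rw [he] at hdm
    simp only [Fin.val_last]
    rw [Nat.mul_add]; omega
  · set mFin : Fin (t+1) := ⟨m, by omega⟩ with hmFin
    refine ⟨Pi.single (0 : Fin (t+1)) (k - d - 1) + Pi.single mFin 1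
      + Pi.single (Fin.last t) d, ?_⟩
    have expand : ∀ x : Fin (t+1), ((Pi.single (0 : Fin (t+1)) (k - d - 1) + Pi.single mFin 1
      + Pi.single (Fin.last t) d : Fin (t+1) → ℕ)) x * (n + x)
      = (Pi.single (0 : Fin (t+1)) (k - d - 1) : Fin (t+1) → ℕ) x * (n + x)
        + (Pi.single mFin 1 : Fin (t+1) → ℕ) x * (n + x)
        + (Pi.single (Fin.last t) d : Fin (t+1) → ℕ) x * (n + x) := by
      intro x; simp [add_mul]
    rw [Finset.sum_congr rfl (fun x _ => expand x), Finset.sum_add_distrib,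
      Finset.sum_add_distrib, single_sum, single_sum, single_sum]
    simp only [Fin.val_last, hmFin, Fin.val_mk, Fin.val_zero, Nat.add_zero, one_mul]
    have hd1 : (d + 1) * n = d * n + n := by ring
    have h1 : (k - d - 1) * n = k * n - d * n - n := by
      rw [Nat.sub_mul, Nat.sub_mul, one_mul]
    have hdn : d * n + n ≤ k * n := by
      have : (d + 1) * n ≤ k * n := Nat.mul_le_mul_right n hlt
      omega
    rw [h1, Nat.mul_add]
    omega

lemma memS_iff (n t : ℕ) (ht : 1 ≤ t) (htn : t < n) (hnt : n ≤ 2*t+1) (x : ℕ) :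
    (∃ c : Fin (t + 1) → ℕ, x = ∑ i, c i * (n + i)) ↔
      (x = 0 ∨ (n ≤ x ∧ x ≤ n + t) ∨ 2*n ≤ x) := by
  constructor
  · rintro ⟨c, rfl⟩
    have hlb : (∑ i, c i) * n ≤ ∑ i, c i * (n + i) := by
      rw [Finset.sum_mul]
      exact Finset.sum_le_sum fun i _ => Nat.mul_le_mul_left _ (Nat.le_add_right _ _)
    have hub : ∑ i, c i * (n + i) ≤ (∑ i, c i) * (n + t) := by
      rw [Finset.sum_mul]
      exact Finset.sum_le_sum fun i _ =>
        Nat.mul_le_mul_left _ (by have := i.isLt; omega)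
    rcases Nat.lt_or_ge (∑ i, c i) 1 with h | h
    · left
      have h0 : ∑ i, c i = 0 := by omega
      rw [Finset.sum_eq_zero_iff] at h0
      exact Finset.sum_eq_zero fun i hi => by rw [h0 i hi, Nat.zero_mul]
    rcases Nat.lt_or_ge (∑ i, c i) 2 with h2 | h2
    · right; left
      have h1 : ∑ i, c i = 1 := by omega
      rw [h1] at hlb hub
      omega
    · right; right
      have h3 : 2 * n ≤ (∑ i, c i) * n := Nat.mul_le_mul_right n h2
      omega
  · rintro (rfl | ⟨h1, h2⟩ | h)
    · obtain ⟨c, hc⟩ := repr_lemma n t 0 0 ht (by omega)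
      exact ⟨c, by simpa using hc⟩
    · obtain ⟨c, hc⟩ := repr_lemma n t 1 (x - n) ht (by omega)
      exact ⟨c, by rw [← hc]; omega⟩
    · have hn : 0 < n := by omega
      have h2 : 2 ≤ x / n := (Nat.le_div_iff_mul_le hn).mpr (by omega)
      have h3 : x % n < n := Nat.mod_lt _ hn
      have h4 : 2 * t ≤ (x / n) * t := Nat.mul_le_mul_right t h2
      obtain ⟨c, hc⟩ := repr_lemma n t (x / n) (x % n) ht (by omega)
      exact ⟨c, by rw [← hc]; rw [Nat.mul_comm]; exact (Nat.div_add_mod x n).symm⟩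

/-- For `q ≥ 2` and `S = ⟨n, n+1, …, n+t⟩` with `⌈(n-1)/2⌉ ≤ t < n`, `t ≠ 1`,
and `q ≤ t + 1`: `GM_q(S) = 3 + (q-1)·n - ⌈n/q⌉ + t`. -/
theorem stmt_18 (n t q : ℕ) (hq : 2 ≤ q)
    (ht0 : ⌈((n : ℚ) - 1) / 2⌉ ≤ (t : ℤ)) (htn : t < n) (ht1 : t ≠ 1)
    (hqt : q ≤ t + 1)
    (S : Set ℕ)
    (hS : S = {x : ℕ | ∃ c : Fin (t + 1) → ℕ, x = ∑ i, c i * (n + i)}) :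
    ((S \ {x | ∃ a ∈ S, a ≠ 0 ∧ ∃ b ∈ S, x = q * a + b}).ncard : ℤ) + 1
      = 3 + ((q : ℤ) - 1) * n - ⌈(n : ℚ) / q⌉ + t := by
  have ht : 1 ≤ t := by omega
  have hq0 : 0 < q := by omega
  -- from ht0 : n ≤ 2t+1
  have hnt' : n ≤ 2 * t + 1 := by
    have h := Int.ceil_le.mp ht0
    rw [div_le_iff₀ (by norm_num : (0:ℚ) < 2)] at h
    push_cast at h
    have : (n : ℚ) ≤ 2 * t + 1 := by linarith
    exact_mod_cast this
  have hn2 : 2 ≤ n := by omega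
  obtain ⟨c, hqc1, hqc2, hceq2⟩ : ∃ c, n ≤ q * c ∧ q * c ≤ n + q - 1 ∧ (n-1)/q + 1 = c := by
    refine ⟨(n + q - 1) / q, ?_, ?_, ?_⟩
    · have hdm := Nat.div_add_mod (n + q - 1) q
      have hmlt : (n + q - 1) % q < q := Nat.mod_lt _ hq0
      omega
    · have hdm := Nat.div_add_mod (n + q - 1) q
      have hmlt : (n + q - 1) % q < q := Nat.mod_lt _ hq0
      omega
    · rw [show n + q - 1 = (n - 1) + q by omega, Nat.add_div_right _ hq0]
  have hcn : c ≤ n := by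
    by_contra hcon
    push_neg at hcon
    have h1 : q * (n + 1) ≤ q * c := Nat.mul_le_mul_left q hcon
    have h2 : n ≤ q * n := Nat.le_mul_of_pos_left n hq0
    have h3 : q * (n + 1) = q * n + q := by ring
    omega
  have hct : c ≤ t + 1 := by
    by_contra hcon
    push_neg at hcon
    have h1 : q * (t + 2) ≤ q * c := Nat.mul_le_mul_left q hcon
    have h2 : 2 * t ≤ q * t := Nat.mul_le_mul_right t hq
    have h3 : q * (t + 2) = q * t + 2 * q := by ring
    omega
  have hc1 : 1 ≤ c := by
    rcases Nat.eq_zero_or_pos c with h | h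
    · rw [h, Nat.mul_zero] at hqc1; omega
    · exact h
  have memS : ∀ x, x ∈ S ↔ (x = 0 ∨ (n ≤ x ∧ x ≤ n + t) ∨ 2*n ≤ x) := by
    intro x
    rw [hS, Set.mem_setOf_eq]
    exact memS_iff n t ht htn hnt' x
  have hqn : 2 * n ≤ q * n := Nat.mul_le_mul_right n hq
  have hq1n : (q + 1) * n = q * n + n := by ring
  have hrep : ∀ r : ℕ, r < n → ∃ i j, q * i + j = r ∧ j < q ∧ i ≤ t := by
    intro r hr
    refine ⟨r / q, r % q, Nat.div_add_mod r q, Nat.mod_lt _ hq0, ?_⟩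
    have h1 : r / q ≤ (n-1)/q := Nat.div_le_div_right (by omega)
    omega
  set A : Finset ℕ := insert 0 (Finset.Icc n (n+t)) ∪
      (Finset.Ico (2*n) ((q+1)*n) \ (Finset.Ico n (n+c)).image (fun a => q * a))
    with hAdef
  have hA : ∀ x, x ∈ A ↔ (x = 0 ∨ (n ≤ x ∧ x ≤ n + t) ∨
      (2*n ≤ x ∧ x < (q+1)*n ∧ ¬ ∃ a, (n ≤ a ∧ a < n + c) ∧ q * a = x)) := by
    intro x
    simp only [hAdef, Finset.mem_union, Finset.mem_insert, Finset.mem_Icc,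
      Finset.mem_sdiff, Finset.mem_Ico, Finset.mem_image]
    tauto
  have hset : S \ {x | ∃ a ∈ S, a ≠ 0 ∧ ∃ b ∈ S, x = q * a + b} = ↑A := by
    ext x
    simp only [Set.mem_diff, Set.mem_setOf_eq, Finset.coe_sort_coe, Finset.mem_coe, hA]
    constructor
    · rintro ⟨hxS, hxT⟩
      rcases (memS x).mp hxS with h0 | h1 | h2
      · exact Or.inl h0
      · exact Or.inr (Or.inl h1)
      · refine Or.inr (Or.inr ⟨h2, ?_, ?_⟩)
        · -- x < (q+1)*n, else x ∈ T
          by_contra hge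
          push_neg at hge
          apply hxT
          rcases le_or_gt ((q+2)*n) x with hbig | hsmall
          · refine ⟨n, (memS n).mpr (Or.inr (Or.inl ⟨le_refl n, by omega⟩)), by omega,
              x - q*n, (memS _).mpr (Or.inr (Or.inr ?_)), ?_⟩
            · have e : (q+2)*n = q*n + 2*n := by ring
              omega
            · have e : (q+2)*n = q*n + 2*n := by ring
              omega
          · have e2 : (q+2)*n = q*n + 2*n := by ring
            obtain ⟨i, j, hij, hj, hi⟩ := hrep (x - (q+1)*n) (by omega)
            refine ⟨n + i, (memS _).mpr (Or.inr (Or.inl ⟨by omega, by omega⟩)), by omega,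
              n + j, (memS _).mpr (Or.inr (Or.inl ⟨by omega, by omega⟩)), ?_⟩
            have e : q * (n + i) = q * n + q * i := by ring
            omega
        · -- not of the form q*a, a ∈ [n, n+c)
          rintro ⟨a, ⟨ha1, ha2⟩, hax⟩
          apply hxT
          refine ⟨a, (memS a).mpr (Or.inr (Or.inl ⟨ha1, by omega⟩)), by omega,
            0, (memS 0).mpr (Or.inl rfl), by omega⟩
    · rintro (h0 | h1 | ⟨h2, hlt, him⟩)
      · refine ⟨(memS x).mpr (Or.inl h0), ?_⟩
        rintro ⟨a, haS, ha0, b, hbS, hx⟩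
        have han : n ≤ a := by rcases (memS a).mp haS with h | h | h <;> omega
        have hqa : q * n ≤ q * a := Nat.mul_le_mul_left q han
        omega
      · refine ⟨(memS x).mpr (Or.inr (Or.inl h1)), ?_⟩
        rintro ⟨a, haS, ha0, b, hbS, hx⟩
        have han : n ≤ a := by rcases (memS a).mp haS with h | h | h <;> omega
        have hqa : q * n ≤ q * a := Nat.mul_le_mul_left q han
        omega
      · refine ⟨(memS x).mpr (Or.inr (Or.inr h2)), ?_⟩
        rintro ⟨a, haS, ha0, b, hbS, hx⟩
        have han : n ≤ a := by rcases (memS a).mp haS with h | h | h <;> omega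
        have hqa : q * n ≤ q * a := Nat.mul_le_mul_left q han
        have hb0 : b = 0 := by
          rcases (memS b).mp hbS with h | h | h <;> omega
        have hx' : x = q * a := by omega
        have hant : a ≤ n + t := by
          rcases (memS a).mp haS with h | h | h
          · omega
          · omega
          · exfalso
            have h1 : q * (2*n) ≤ q * a := Nat.mul_le_mul_left q h
            have h2 : q * (2*n) = 2 * (q * n) := by ring
            omega
        have hac : a < n + c := by
          by_contra hcon
          push_neg at hcon
          have h1 : q * (n + c) ≤ q * a := Nat.mul_le_mul_left q hcon
          have h2 : q * (n + c) = q * n + q * c := by ring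
          omega
        exact him ⟨a, ⟨han, hac⟩, hx'.symm⟩
  -- cardinality of A
  have himsub : (Finset.Ico n (n+c)).image (fun a => q * a) ⊆ Finset.Ico (2*n) ((q+1)*n) := by
    intro x hx
    simp only [Finset.mem_image, Finset.mem_Ico] at hx ⊢
    obtain ⟨a, ⟨ha1, ha2⟩, rfl⟩ := hx
    constructor
    · have := Nat.mul_le_mul_left q ha1; omega
    · by_contra hcon
      push_neg at hcon
      have h1 : q * (a+1) ≤ q * (n + c) := Nat.mul_le_mul_left q (by omega)
      have h2 : q * (n + c) = q * n + q * c := by ring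
      have h3 : q * (a+1) = q * a + q := by ring
      omega
  have hcard : A.card = t + 2 + ((q+1)*n - 2*n - c) := by
    rw [hAdef, Finset.card_union_of_disjoint, Finset.card_insert_of_notMem,
      Finset.card_sdiff_of_subset himsub, Finset.card_image_of_injective _
        (fun a b hab => Nat.eq_of_mul_eq_mul_left hq0 hab),
      Nat.card_Icc, Nat.card_Ico, Nat.card_Ico]
    · omega
    · simp only [Finset.mem_Icc]; omega
    · rw [Finset.disjoint_left]
      intro x hx hx2
      simp only [Finset.mem_insert, Finset.mem_Icc] at hx
      simp only [Finset.mem_sdiff, Finset.mem_Ico] at hx2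
      omega
  have hceil : ⌈(n : ℚ) / q⌉ = (c : ℤ) := by
    have hqQ : (0:ℚ) < q := by exact_mod_cast hq0
    rw [Int.ceil_eq_iff]
    have hcast1 : (n : ℚ) ≤ q * c := by exact_mod_cast hqc1
    have hcast2 : (q : ℚ) * c + 1 ≤ n + q := by exact_mod_cast (show q * c + 1 ≤ n + q by omega)
    constructor
    · rw [lt_div_iff₀ hqQ]
      push_cast
      linarith
    · rw [div_le_iff₀ hqQ]
      push_cast
      linarith
  rw [hset, Set.ncard_coe_finset, hcard, hceil]
  have hsub : 2 * n + c ≤ (q + 1) * n := by omega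
  have hm : ((q+1)*n - 2*n - c) + 2*n + c = (q+1)*n := by omega
  have hmz : (((q+1)*n - 2*n - c : ℕ) : ℤ) + 2*n + c = ((q:ℤ) + 1) * n := by
    exact_mod_cast hm
  push_cast
  have e1 : ((q:ℤ) + 1) * n = q * n + n := by ring
  have e2 : ((q:ℤ) - 1) * n = q * n - n := by ring
  linarith [hmz]
end

section
/- Let q ≥ 2 and S = ⟨n, n+1, ..., n+t⟩ with ⌈(n-1)/2⌉ ≤ t < n, t ≠ 1, and n ≤ q. Then GM_q(S) = 2 + q·n - ⌈2n/q⌉ + ⌊(t+n)/q⌋. In particular, for the ordinary semigroup t = n-1 this gives GM_q(S) = 2 + q·n - ⌈n/q⌉. -/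
lemma aux_sum_ge (n t : ℕ) (c : Fin (t+1) → ℕ) :
    (∑ i, c i) * n ≤ ∑ i, c i * (n + ↑i) := by
  rw [Finset.sum_mul]
  exact Finset.sum_le_sum fun i _ => Nat.mul_le_mul_left _ (Nat.le_add_right _ _)

lemma aux_sum_le (n t : ℕ) (c : Fin (t+1) → ℕ) :
    ∑ i, c i * (n + ↑i) ≤ (∑ i, c i) * (n + t) := by
  rw [Finset.sum_mul]
  exact Finset.sum_le_sum fun i _ =>
    Nat.mul_le_mul_left _ (by have := i.isLt; omega)

lemma aux_mem_gen (n t : ℕ) : ∀ k r : ℕ, r ≤ k * t →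
    ∃ c : Fin (t+1) → ℕ, k * n + r = ∑ i, c i * (n + ↑i) := by
  intro k
  induction k with
  | zero => intro r hr; refine ⟨0, ?_⟩; simp; omega
  | succ k ih =>
    intro r hr
    rw [Nat.succ_mul] at hr
    by_cases hrt : r ≤ t
    · refine ⟨fun i => (if i = ⟨r, by omega⟩ then 1 else 0) + (if i = 0 then k else 0), ?_⟩
      simp only [add_mul, Finset.sum_add_distrib, ite_mul, one_mul, zero_mul]
      rw [Finset.sum_ite_eq' Finset.univ, Finset.sum_ite_eq' Finset.univ]
      simp
      ring_nf
    · obtain ⟨c, hc⟩ := ih (r - t) (by omega)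
      refine ⟨fun i => c i + (if i = ⟨t, by omega⟩ then 1 else 0), ?_⟩
      simp only [add_mul, Finset.sum_add_distrib, ite_mul, one_mul, zero_mul]
      rw [Finset.sum_ite_eq' Finset.univ]
      simp [← hc]
      omega

lemma aux_S_char (n t : ℕ) (hn1 : 1 ≤ n) (h2t : n ≤ 2*t+1) (x : ℕ) :
    (∃ c : Fin (t+1) → ℕ, x = ∑ i, c i * (n + ↑i)) ↔
      (x = 0 ∨ (n ≤ x ∧ x ≤ n+t) ∨ 2*n ≤ x) := by
  constructor
  · rintro ⟨c, rfl⟩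
    have h1 := aux_sum_ge n t c
    have h2 := aux_sum_le n t c
    obtain hk|hk|hk : (∑ i, c i) = 0 ∨ (∑ i, c i) = 1 ∨ 2 ≤ (∑ i, c i) := by omega
    · rw [hk] at h2; simp only [zero_mul, Nat.le_zero] at h2; omega
    · rw [hk] at h1 h2; simp only [one_mul] at h1 h2; omega
    · have h3 : 2*n ≤ (∑ i, c i) * n := Nat.mul_le_mul_right n hk
      omega
  · rintro (rfl|⟨h1,h2⟩|h)
    · exact ⟨0, by simp⟩
    · obtain ⟨c, hc⟩ := aux_mem_gen n t 1 (x - n) (by omega)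
      refine ⟨c, ?_⟩; omega
    · set k := x / n with hk
      have hk2 : 2 ≤ k := by
        rw [hk, Nat.le_div_iff_mul_le (by omega)]; omega
      have hmod := Nat.div_add_mod x n
      have hr : x % n < n := Nat.mod_lt _ (by omega)
      have h3 : 2*t ≤ k*t := Nat.mul_le_mul_right t hk2
      obtain ⟨c, hc⟩ := aux_mem_gen n t k (x % n) (by omega)
      have h5 : n * (x / n) = k * n := by rw [hk, Nat.mul_comm]
      refine ⟨c, ?_⟩; omega

lemma aux_T_char (n t q : ℕ) (hq : 2 ≤ q) (hn1 : 1 ≤ n) (h2t : n ≤ 2*t+1)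
    (htn : t < n) (hnq : n ≤ q) (S : Set ℕ)
    (hSA : ∀ y, y ∈ S ↔ (y = 0 ∨ (n ≤ y ∧ y ≤ n+t) ∨ 2*n ≤ y)) (x : ℕ) :
    (∃ a ∈ S, a ≠ 0 ∧ ∃ b ∈ S, x = q * a + b) ↔
      (x = q*n ∨ (q*n+n ≤ x ∧ x ≤ q*n+n+t) ∨ (x = q*n+q ∧ q < 2*n) ∨
        q*n+2*n ≤ x) := by
  have hge : 2*n ≤ q*n := Nat.mul_le_mul_right n hq
  constructor
  · rintro ⟨a, ha, ha0, b, hb, rfl⟩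
    rw [hSA] at ha hb
    obtain hA|hA|hA : a = n ∨ a = n+1 ∨ n+2 ≤ a := by omega
    · subst hA; omega
    · subst hA
      have he : q*(n+1) = q*n + q := by ring
      rw [he]
      omega
    · have h1 : q*(n+2) ≤ q*a := Nat.mul_le_mul_left q (by omega)
      have h2 : q*(n+2) = q*n + 2*q := by ring
      have h3 : 2*n ≤ 2*q := by omega
      omega
  · rintro (rfl | h | ⟨rfl, h2n⟩ | h)
    · exact ⟨n, (hSA n).mpr (by omega), by omega, 0, (hSA 0).mpr (by omega),
        by omega⟩
    · exact ⟨n, (hSA n).mpr (by omega), by omega, x - q*n,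
        (hSA _).mpr (by omega), by omega⟩
    · have htpos : 1 ≤ t := by omega
      exact ⟨n+1, (hSA (n+1)).mpr (by omega), by omega, 0,
        (hSA 0).mpr (by omega), by ring⟩
    · exact ⟨n, (hSA n).mpr (by omega), by omega, x - q*n,
        (hSA _).mpr (by omega), by omega⟩



/-- For `q ≥ 2` and `S = ⟨n, n+1, …, n+t⟩` with `⌈(n-1)/2⌉ ≤ t < n`, `t ≠ 1`,
and `n ≤ q`: `GM_q(S) = 2 + q·n - ⌈2n/q⌉ + ⌊(t+n)/q⌋`; in particular for the
ordinary semigroup `t = n - 1` this gives `GM_q(S) = 2 + q·n - ⌈n/q⌉`. -/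
theorem stmt_19 (n t q : ℕ) (hq : 2 ≤ q)
    (ht0 : ⌈((n : ℚ) - 1) / 2⌉ ≤ (t : ℤ)) (htn : t < n) (ht1 : t ≠ 1)
    (hnq : n ≤ q)
    (S : Set ℕ)
    (hS : S = {x : ℕ | ∃ c : Fin (t + 1) → ℕ, x = ∑ i, c i * (n + i)}) :
    ((S \ {x | ∃ a ∈ S, a ≠ 0 ∧ ∃ b ∈ S, x = q * a + b}).ncard : ℤ) + 1
      = 2 + (q : ℤ) * n - ⌈(2 * (n : ℚ)) / q⌉ + ((t + n) / q : ℕ) ∧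
    (t = n - 1 →
      ((S \ {x | ∃ a ∈ S, a ≠ 0 ∧ ∃ b ∈ S, x = q * a + b}).ncard : ℤ) + 1
        = 2 + (q : ℤ) * n - ⌈(n : ℚ) / q⌉) := by
  have hn1 : 1 ≤ n := by omega
  have h2t : n ≤ 2*t+1 := by
    have h := Int.ceil_le.mp ht0
    have h' : ((n:ℚ) - 1) / 2 ≤ (t:ℚ) := by exact_mod_cast h
    have h'' : (n:ℚ) ≤ 2*(t:ℚ)+1 := by linarith
    exact_mod_cast h''
  have hge : 2*n ≤ q*n := Nat.mul_le_mul_right n hq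
  have hSA : ∀ y, y ∈ S ↔ (y = 0 ∨ (n ≤ y ∧ y ≤ n+t) ∨ 2*n ≤ y) := by
    intro y; rw [hS]; simp only [Set.mem_setOf_eq]
    exact aux_S_char n t hn1 h2t y
  have hTc := aux_T_char n t q hq hn1 h2t htn hnq S hSA
  set B : Finset ℕ := ({q*n} ∪ Finset.Icc (q*n+n) (q*n+n+t)) ∪
      (if n+t < q ∧ q < 2*n then {q*n+q} else ∅) with hB
  set F : Finset ℕ := ({0} ∪ Finset.Icc n (n+t)) ∪
      (Finset.Ico (2*n) (q*n+2*n) \ B) with hF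
  have hDF : S \ {x | ∃ a ∈ S, a ≠ 0 ∧ ∃ b ∈ S, x = q * a + b} = ↑F := by
    ext x
    simp only [Set.mem_diff, Set.mem_setOf_eq, hTc x, hSA x, Finset.mem_coe,
      hF, hB, Finset.mem_union, Finset.mem_sdiff,
      Finset.mem_Icc, Finset.mem_Ico, Finset.mem_singleton]
    split_ifs with hcond
    · simp only [Finset.mem_singleton]; omega
    · simp only [Finset.notMem_empty, or_false]; omega
  have hBsub : B ⊆ Finset.Ico (2*n) (q*n+2*n) := by
    intro x hx
    simp only [hB, Finset.mem_union, Finset.mem_Icc, Finset.mem_singleton] at hx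
    rw [Finset.mem_Ico]
    split_ifs at hx with hcond
    · simp only [Finset.mem_singleton] at hx; omega
    · simp only [Finset.notMem_empty, or_false] at hx; omega
  have hd1 : Disjoint ({q*n} : Finset ℕ) (Finset.Icc (q*n+n) (q*n+n+t)) := by
    simp only [Finset.disjoint_left, Finset.mem_singleton, Finset.mem_Icc]
    rintro x rfl; omega
  have hd2 : Disjoint (({q*n} : Finset ℕ) ∪ Finset.Icc (q*n+n) (q*n+n+t))
      (if n+t < q ∧ q < 2*n then ({q*n+q} : Finset ℕ) else ∅) := by
    split_ifs with hcond
    · simp only [Finset.disjoint_right, Finset.mem_singleton, Finset.mem_union,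
        Finset.mem_Icc]
      rintro x rfl; omega
    · simp
  have hcardB : B.card = t + 2 + (if n+t < q ∧ q < 2*n then 1 else 0) := by
    rw [hB, Finset.card_union_of_disjoint hd2, Finset.card_union_of_disjoint hd1,
      Finset.card_singleton, Nat.card_Icc]
    split_ifs with hcond
    · rw [Finset.card_singleton]; omega
    · rw [Finset.card_empty]; omega
  have hd3 : Disjoint ({0} : Finset ℕ) (Finset.Icc n (n+t)) := by
    simp only [Finset.disjoint_left, Finset.mem_singleton, Finset.mem_Icc]
    rintro x rfl; omega
  have hd4 : Disjoint (({0} : Finset ℕ) ∪ Finset.Icc n (n+t))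
      (Finset.Ico (2*n) (q*n+2*n) \ B) := by
    rw [Finset.disjoint_left]
    intro x hx hx2
    have h1 := (Finset.mem_sdiff.mp hx2).1
    rw [Finset.mem_Ico] at h1
    simp only [Finset.mem_union, Finset.mem_singleton, Finset.mem_Icc] at hx
    omega
  have hcardF : F.card = q*n - (if n+t < q ∧ q < 2*n then 1 else 0) := by
    rw [hF, Finset.card_union_of_disjoint hd4, Finset.card_union_of_disjoint hd3,
      Finset.card_sdiff_of_subset hBsub, hcardB, Nat.card_Ico, Finset.card_singleton,
      Nat.card_Icc]
    split_ifs with hcond <;> omega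
  have hNC : (S \ {x | ∃ a ∈ S, a ≠ 0 ∧ ∃ b ∈ S, x = q * a + b}).ncard
      = q*n - (if n+t < q ∧ q < 2*n then 1 else 0) := by
    rw [hDF, Set.ncard_coe_finset, hcardF]
  have hcast : ((q*n : ℕ) : ℤ) = (q:ℤ) * (n:ℤ) := by push_cast; ring
  have hqQ : (0:ℚ) < q := by exact_mod_cast (by omega : 0 < q)
  have hnQ : (0:ℚ) < n := by exact_mod_cast hn1
  have hceil1 : 2*n ≤ q → ⌈(2 * (n : ℚ)) / q⌉ = 1 := by
    intro hA
    rw [Int.ceil_eq_iff]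
    constructor
    · push_cast
      have : (0:ℚ) < 2*(n:ℚ)/q := div_pos (by linarith) hqQ
      linarith
    · push_cast
      rw [div_le_one hqQ]
      exact_mod_cast hA
  have hceil2 : q < 2*n → ⌈(2 * (n : ℚ)) / q⌉ = 2 := by
    intro hA
    rw [Int.ceil_eq_iff]
    constructor
    · push_cast
      rw [lt_div_iff₀ hqQ]
      have : (q:ℚ) < 2*n := by exact_mod_cast hA
      linarith
    · push_cast
      rw [div_le_iff₀ hqQ]
      have : (n:ℚ) ≤ q := by exact_mod_cast hnq
      linarith
  constructor
  · rw [hNC]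
    obtain hA|hA|hA : 2*n ≤ q ∨ (q < 2*n ∧ q ≤ n+t) ∨ (q < 2*n ∧ n+t < q) := by
      omega
    · rw [hceil1 hA, if_neg (by omega), Nat.div_eq_of_lt (by omega)]
      omega
    · rw [hceil2 hA.1, if_neg (by omega),
        (show (t+n)/q = 1 from Nat.div_eq_of_lt_le (by omega) (by omega))]
      omega
    · rw [hceil2 hA.1, if_pos (by omega), Nat.div_eq_of_lt (by omega)]
      omega
  · intro htEq
    rw [hNC, if_neg (by omega)]
    have hceil3 : ⌈(n : ℚ) / q⌉ = 1 := by
      rw [Int.ceil_eq_iff]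
      constructor
      · push_cast
        have : (0:ℚ) < (n:ℚ)/q := div_pos hnQ hqQ
        linarith
      · push_cast
        rw [div_le_one hqQ]
        exact_mod_cast hnq
    rw [hceil3]
    omega
end
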